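/- arXiv:1706.04447 — 8 statements merged into one kernel-verified Lean document; each statement's English description precedes it below -/
import Mathlib

section
/- For the controlled SIR system with reduction-of-transmission control, let J(τ) denote the eradication time of the trajectory with delayed bang-bang control u(·;τ), and let T_unc denote the eradication time of the uncontrolled trajectory (u ≡ 0). Then J is a continuous function of τ on the interval [0, T_unc], and consequently J attains a minimum on [0, T_unc]; in particular a time-optimal control within the class of delayed bang-bang controls exists. -/
open MeasureTheory Set intervalIntegral Real

/-- Trajectory of the SIR system with reduction-of-transmission control, in Carathéodory
(integral) form: `S' = -β(1-u)SI`, `I' = β(1-u)SI - μI` on `[0, ∞)`. -/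
def IsRedTraj (β μ : ℝ) (u S I : ℝ → ℝ) : Prop :=
  ContinuousOn S (Set.Ici 0) ∧ ContinuousOn I (Set.Ici 0) ∧
  (∀ t, 0 ≤ t → S t = S 0 + ∫ s in (0:ℝ)..t, (-(β * (1 - u s) * S s * I s))) ∧
  (∀ t, 0 ≤ t → I t = I 0 + ∫ s in (0:ℝ)..t, (β * (1 - u s) * S s * I s - μ * I s))

/-- `T` is the eradication time: the first time at which `I` reaches the threshold `ε`. -/
def IsEradicationTime (I : ℝ → ℝ) (ε T : ℝ) : Prop :=
  0 ≤ T ∧ I T = ε ∧ ∀ t, 0 ≤ t → t < T → ε < I t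

/-- The delayed bang-bang control `u(·;τ)`: no control before `τ`, maximal control after. -/
noncomputable def delayedControl (umax τ : ℝ) : ℝ → ℝ := fun t => if t < τ then 0 else umax

theorem gronwall_cont {φ : ℝ → ℝ} {L a b : ℝ} (hφ : Continuous φ) (hL : 0 ≤ L)
    (h : ∀ t ∈ Icc (0:ℝ) b, φ t ≤ a + ∫ s in (0:ℝ)..t, L * φ s) :
    ∀ t ∈ Icc (0:ℝ) b, φ t ≤ a * Real.exp (L * t) := by
  set ψ : ℝ → ℝ := fun t => a + ∫ s in (0:ℝ)..t, L * φ s with hψdef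
  have hint : ∀ a' b' : ℝ, IntervalIntegrable (fun s => L * φ s) volume a' b' :=
    fun a' b' => (continuous_const.mul hφ).intervalIntegrable a' b'
  have hcont : Continuous ψ := continuous_const.add (intervalIntegral.continuous_primitive hint 0)
  have hderiv : ∀ x : ℝ, HasDerivWithinAt ψ (L * φ x) (Ici x) x := by
    intro x
    exact (intervalIntegral.integral_hasDerivWithinAt_right (hint 0 x)
      ((continuous_const.mul hφ).stronglyMeasurableAtFilter _ _)
      (continuous_const.mul hφ).continuousWithinAt).const_add a
  have key : ∀ t ∈ Icc (0:ℝ) b, ψ t ≤ gronwallBound a L 0 (t - 0) := by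
    apply le_gronwallBound_of_liminf_deriv_right_le hcont.continuousOn
    · intro x hx r hr
      exact (hderiv x).liminf_right_slope_le hr
    · simp [hψdef]
    · intro x hx
      have := h x ⟨hx.1, hx.2.le⟩
      have h2 : φ x ≤ ψ x := this
      nlinarith [mul_le_mul_of_nonneg_left h2 hL]
  intro t ht
  calc φ t ≤ ψ t := h t ht
    _ ≤ gronwallBound a L 0 (t - 0) := key t ht
    _ = a * Real.exp (L * t) := by rw [sub_zero, gronwallBound_ε0]

theorem gronwall_contOn {φ : ℝ → ℝ} {L a b : ℝ} (hb : 0 ≤ b) (hL : 0 ≤ L)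
    (hφ : ContinuousOn φ (Icc 0 b))
    (h : ∀ t ∈ Icc (0:ℝ) b, φ t ≤ a + ∫ s in (0:ℝ)..t, L * φ s) :
    ∀ t ∈ Icc (0:ℝ) b, φ t ≤ a * Real.exp (L * t) := by
  set pr : ℝ → ℝ := fun r => max 0 (min r b) with hpr
  have hprc : Continuous pr := continuous_const.max (continuous_id.min continuous_const)
  have hprmem : ∀ r, pr r ∈ Icc (0:ℝ) b := fun r => ⟨le_max_left _ _, max_le hb (min_le_right _ _)⟩
  have hpreq : ∀ r ∈ Icc (0:ℝ) b, pr r = r := fun r hr => by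
    simp [hpr, min_eq_left hr.2, max_eq_right hr.1]
  have hcc : Continuous (φ ∘ pr) := hφ.comp_continuous hprc hprmem
  have key := gronwall_cont (φ := φ ∘ pr) (L := L) (a := a) (b := b) hcc hL ?_
  · intro t ht
    have := key t ht
    rwa [Function.comp_apply, hpreq t ht] at this
  · intro t ht
    have hsub : uIcc (0:ℝ) t ⊆ Icc 0 b := by
      rw [uIcc_of_le ht.1]
      exact Icc_subset_Icc le_rfl ht.2
    have : (∫ s in (0:ℝ)..t, L * (φ ∘ pr) s) = ∫ s in (0:ℝ)..t, L * φ s := by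
      apply intervalIntegral.integral_congr
      intro s hs
      simp [Function.comp_apply, hpreq s (hsub hs)]
    rw [Function.comp_apply, hpreq t ht, this]
    exact h t ht

theorem integr_aux {f : ℝ → ℝ} {a' b' : ℝ} (hab : a' ≤ b')
    (hm : AEStronglyMeasurable f (volume.restrict (Icc a' b')))
    {C : ℝ} (hC : ∀ s ∈ Icc a' b', |f s| ≤ C) :
    IntervalIntegrable f volume a' b' := by
  have hInt : IntegrableOn f (Icc a' b') volume := by
    refine Integrable.mono' ((integrableOn_const_iff (C := C)).2 (Or.inr measure_Icc_lt_top)) hm ?_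
    exact (ae_restrict_iff' measurableSet_Icc).2 (ae_of_all _ hC)
  rw [intervalIntegrable_iff_integrableOn_Icc_of_le hab]
  exact hInt

section Traj
variable {β μ : ℝ} {u S I : ℝ → ℝ}
  (hβ : 0 < β) (hμ : 0 < μ)
  (hu : Measurable u) (hu0 : ∀ s, 0 ≤ u s) (hu1 : ∀ s, u s ≤ 1)
  (hT : IsRedTraj β μ u S I)
include hβ hμ hu hu0 hu1 hT

/-- bound on |S| and |I| on a compact interval -/
theorem traj_bound (b : ℝ) (hb : 0 ≤ b) :
    ∃ C : ℝ, 0 ≤ C ∧ (∀ s ∈ Icc (0:ℝ) b, |S s| ≤ C) ∧ (∀ s ∈ Icc (0:ℝ) b, |I s| ≤ C) := by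
  obtain ⟨C₁, hC₁⟩ := isCompact_Icc.exists_bound_of_continuousOn
    (hT.1.mono (Icc_subset_Ici_self : Icc (0:ℝ) b ⊆ Ici 0))
  obtain ⟨C₂, hC₂⟩ := isCompact_Icc.exists_bound_of_continuousOn
    (hT.2.1.mono (Icc_subset_Ici_self : Icc (0:ℝ) b ⊆ Ici 0))
  simp only [Real.norm_eq_abs] at hC₁ hC₂
  refine ⟨max C₁ C₂ ⊔ 0, le_max_right _ _, fun s hs => ?_, fun s hs => ?_⟩
  · exact le_max_of_le_left ((hC₁ s hs).trans (le_max_left _ _))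
  · exact le_max_of_le_left ((hC₂ s hs).trans (le_max_right _ _))

theorem FS_meas {a' b' : ℝ} (ha : 0 ≤ a') :
    AEStronglyMeasurable (fun s => -(β * (1 - u s) * S s * I s))
      (volume.restrict (Icc a' b')) := by
  have hIcc : Icc a' b' ⊆ Ici (0:ℝ) := fun x hx => le_trans ha hx.1
  have hS : AEStronglyMeasurable S (volume.restrict (Icc a' b')) :=
    (hT.1.mono hIcc).aestronglyMeasurable measurableSet_Icc
  have hI : AEStronglyMeasurable I (volume.restrict (Icc a' b')) :=
    (hT.2.1.mono hIcc).aestronglyMeasurable measurableSet_Icc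
  have hu' : AEStronglyMeasurable u (volume.restrict (Icc a' b')) :=
    hu.aestronglyMeasurable.restrict
  exact (((aestronglyMeasurable_const.mul (aestronglyMeasurable_const.sub hu')).mul hS).mul hI).neg

theorem FI_meas {a' b' : ℝ} (ha : 0 ≤ a') :
    AEStronglyMeasurable (fun s => β * (1 - u s) * S s * I s - μ * I s)
      (volume.restrict (Icc a' b')) := by
  have hIcc : Icc a' b' ⊆ Ici (0:ℝ) := fun x hx => le_trans ha hx.1
  have hS : AEStronglyMeasurable S (volume.restrict (Icc a' b')) :=
    (hT.1.mono hIcc).aestronglyMeasurable measurableSet_Icc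
  have hI : AEStronglyMeasurable I (volume.restrict (Icc a' b')) :=
    (hT.2.1.mono hIcc).aestronglyMeasurable measurableSet_Icc
  have hu' : AEStronglyMeasurable u (volume.restrict (Icc a' b')) :=
    hu.aestronglyMeasurable.restrict
  exact ((((aestronglyMeasurable_const.mul (aestronglyMeasurable_const.sub hu')).mul hS).mul hI)).sub
    (aestronglyMeasurable_const.mul hI)

theorem FS_int {a' b' : ℝ} (ha : 0 ≤ a') (hab : a' ≤ b') :
    IntervalIntegrable (fun s => -(β * (1 - u s) * S s * I s)) volume a' b' := by
  obtain ⟨C, hC0, hCS, hCI⟩ := traj_bound hβ hμ hu hu0 hu1 hT b' (le_trans ha hab)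
  have hsub : Icc a' b' ⊆ Icc 0 b' := Icc_subset_Icc ha le_rfl
  refine integr_aux hab (FS_meas hβ hμ hu hu0 hu1 hT ha) (C := β * C * C) fun s hs => ?_
  have h1 : |1 - u s| ≤ 1 := by
    rw [abs_le]; constructor <;> nlinarith [hu0 s, hu1 s]
  have := hCS s (hsub hs); have := hCI s (hsub hs)
  rw [abs_neg, abs_mul, abs_mul, abs_mul, abs_of_pos hβ]
  calc β * |1 - u s| * |S s| * |I s| ≤ β * 1 * C * C := by
        gcongr <;> positivity
    _ = β * C * C := by ring

theorem FI_int {a' b' : ℝ} (ha : 0 ≤ a') (hab : a' ≤ b') :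
    IntervalIntegrable (fun s => β * (1 - u s) * S s * I s - μ * I s) volume a' b' := by
  obtain ⟨C, hC0, hCS, hCI⟩ := traj_bound hβ hμ hu hu0 hu1 hT b' (le_trans ha hab)
  have hsub : Icc a' b' ⊆ Icc 0 b' := Icc_subset_Icc ha le_rfl
  refine integr_aux hab (FI_meas hβ hμ hu hu0 hu1 hT ha) (C := β * C * C + μ * C) fun s hs => ?_
  have h1 : |1 - u s| ≤ 1 := by
    rw [abs_le]; constructor <;> nlinarith [hu0 s, hu1 s]
  have := hCS s (hsub hs); have := hCI s (hsub hs)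
  have habs : |β * (1 - u s) * S s * I s - μ * I s| ≤
      |β * (1 - u s) * S s * I s| + |μ * I s| := abs_sub _ _
  rw [abs_mul, abs_mul, abs_mul, abs_of_pos hβ, abs_mul, abs_of_pos hμ] at habs
  have h2 : β * |1 - u s| * |S s| * |I s| ≤ β * 1 * C * C := by gcongr <;> positivity
  have h3 : μ * |I s| ≤ μ * C := by gcongr
  nlinarith

/-- difference form of the integral equations -/
theorem S_diff {t₁ t₂ : ℝ} (h1 : 0 ≤ t₁) (h12 : t₁ ≤ t₂) :
    S t₂ = S t₁ + ∫ s in t₁..t₂, (-(β * (1 - u s) * S s * I s)) := by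
  have e1 := hT.2.2.1 t₁ h1
  have e2 := hT.2.2.1 t₂ (le_trans h1 h12)
  have hadd := intervalIntegral.integral_add_adjacent_intervals
    (FS_int hβ hμ hu hu0 hu1 hT le_rfl h1) (FS_int hβ hμ hu hu0 hu1 hT h1 h12)
  rw [e2, ← hadd, e1]; ring

theorem I_diff {t₁ t₂ : ℝ} (h1 : 0 ≤ t₁) (h12 : t₁ ≤ t₂) :
    I t₂ = I t₁ + ∫ s in t₁..t₂, (β * (1 - u s) * S s * I s - μ * I s) := by
  have e1 := hT.2.2.2 t₁ h1
  have e2 := hT.2.2.2 t₂ (le_trans h1 h12)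
  have hadd := intervalIntegral.integral_add_adjacent_intervals
    (FI_int hβ hμ hu hu0 hu1 hT le_rfl h1) (FI_int hβ hμ hu hu0 hu1 hT h1 h12)
  rw [e2, ← hadd, e1]; ring


theorem I_pos (hI0 : 0 < I 0) : ∀ t, 0 ≤ t → 0 < I t := by
  by_contra hcon
  push_neg at hcon
  obtain ⟨t₁, ht₁, hle⟩ := hcon
  have hcont : ContinuousOn I (Icc 0 t₁) := hT.2.1.mono Icc_subset_Ici_self
  obtain ⟨t₂, ht₂, hIt₂⟩ := intermediate_value_Icc' ht₁ hcont ⟨hle, hI0.le⟩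
  obtain ⟨C, hC0, hCS, hCI⟩ := traj_bound hβ hμ hu hu0 hu1 hT t₂ ht₂.1
  set A := β * C + μ with hAdef
  have hA : 0 ≤ A := by positivity
  set φ : ℝ → ℝ := fun r => |I (t₂ - r)| with hφdef
  have hIcont2 : ContinuousOn I (Icc 0 t₂) := hT.2.1.mono Icc_subset_Ici_self
  have hφcont : ContinuousOn φ (Icc 0 t₂) := by
    apply ContinuousOn.abs
    apply hIcont2.comp ((continuous_const.sub continuous_id).continuousOn)
    intro r hr
    exact ⟨by simp; linarith [hr.2], by simp; linarith [hr.1]⟩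
  have key : ∀ r ∈ Icc (0:ℝ) t₂, φ r ≤ 0 + ∫ s in (0:ℝ)..r, A * φ s := by
    intro r hr
    have ht2r : 0 ≤ t₂ - r := by linarith [hr.2]
    have hrt2 : t₂ - r ≤ t₂ := by linarith [hr.1]
    have hdiff := I_diff hβ hμ hu hu0 hu1 hT ht2r hrt2
    rw [hIt₂] at hdiff
    have heq : φ r = |∫ s in (t₂ - r)..t₂, (β * (1 - u s) * S s * I s - μ * I s)| := by
      simp only [hφdef]
      have : I (t₂ - r) = -∫ s in (t₂ - r)..t₂, (β * (1 - u s) * S s * I s - μ * I s) := by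
        linarith
      rw [this, abs_neg]
    have hIA : IntervalIntegrable (fun s => A * |I s|) volume (t₂ - r) t₂ := by
      apply ContinuousOn.intervalIntegrable
      apply (continuousOn_const.mul ?_)
      apply ContinuousOn.abs
      apply hT.2.1.mono
      rw [uIcc_of_le hrt2]
      intro x hx; exact le_trans ht2r hx.1
    have hstep : |∫ s in (t₂ - r)..t₂, (β * (1 - u s) * S s * I s - μ * I s)|
        ≤ ∫ s in (t₂ - r)..t₂, A * |I s| := by
      have h1 : |∫ s in (t₂ - r)..t₂, (β * (1 - u s) * S s * I s - μ * I s)|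
          ≤ ∫ s in (t₂ - r)..t₂, |β * (1 - u s) * S s * I s - μ * I s| := by
        simpa [Real.norm_eq_abs] using
          intervalIntegral.norm_integral_le_integral_norm (a := t₂ - r) (b := t₂)
            (f := fun s => β * (1 - u s) * S s * I s - μ * I s) hrt2
      refine h1.trans (intervalIntegral.integral_mono_on hrt2
        ((FI_int hβ hμ hu hu0 hu1 hT ht2r hrt2).abs) hIA ?_)
      intro s hs
      have hs2 : s ∈ Icc 0 t₂ := ⟨le_trans ht2r hs.1, hs.2⟩
      have hScC := hCS s hs2
      have hIcC := hCI s hs2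
      have h1u : |1 - u s| ≤ 1 := by
        rw [abs_le]; constructor <;> nlinarith [hu0 s, hu1 s]
      have habs : |β * (1 - u s) * S s * I s - μ * I s| ≤
          |β * (1 - u s) * S s * I s| + |μ * I s| := abs_sub _ _
      rw [abs_mul, abs_mul, abs_mul, abs_of_pos hβ, abs_mul, abs_of_pos hμ] at habs
      have h2 : β * |1 - u s| * |S s| * |I s| ≤ β * 1 * C * |I s| := by
        gcongr <;> positivity
      rw [hAdef]
      nlinarith [abs_nonneg (I s)]
    have hcv : (∫ s in (0:ℝ)..r, A * φ s) = ∫ s in (t₂ - r)..t₂, A * |I s| := by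
      have := intervalIntegral.integral_comp_sub_left (a := (0:ℝ)) (b := r)
        (fun s => A * |I s|) t₂
      simpa [hφdef] using this
    rw [zero_add, hcv, heq]
    exact hstep
  have hfin := gronwall_contOn ht₂.1 hA hφcont key t₂ ⟨ht₂.1, le_refl _⟩
  have h0 : |I 0| ≤ 0 := by simpa [hφdef] using hfin
  rw [abs_of_pos hI0] at h0
  linarith

theorem S_pos (hS0 : 0 < S 0) : ∀ t, 0 ≤ t → 0 < S t := by
  by_contra hcon
  push_neg at hcon
  obtain ⟨t₁, ht₁, hle⟩ := hcon
  have hcont : ContinuousOn S (Icc 0 t₁) := hT.1.mono Icc_subset_Ici_self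
  obtain ⟨t₂, ht₂, hIt₂⟩ := intermediate_value_Icc' ht₁ hcont ⟨hle, hS0.le⟩
  obtain ⟨C, hC0, hCS, hCI⟩ := traj_bound hβ hμ hu hu0 hu1 hT t₂ ht₂.1
  set A := β * C with hAdef
  have hA : 0 ≤ A := by positivity
  set φ : ℝ → ℝ := fun r => |S (t₂ - r)| with hφdef
  have hScont2 : ContinuousOn S (Icc 0 t₂) := hT.1.mono Icc_subset_Ici_self
  have hφcont : ContinuousOn φ (Icc 0 t₂) := by
    apply ContinuousOn.abs
    apply hScont2.comp ((continuous_const.sub continuous_id).continuousOn)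
    intro r hr
    exact ⟨by simp; linarith [hr.2], by simp; linarith [hr.1]⟩
  have key : ∀ r ∈ Icc (0:ℝ) t₂, φ r ≤ 0 + ∫ s in (0:ℝ)..r, A * φ s := by
    intro r hr
    have ht2r : 0 ≤ t₂ - r := by linarith [hr.2]
    have hrt2 : t₂ - r ≤ t₂ := by linarith [hr.1]
    have hdiff := S_diff hβ hμ hu hu0 hu1 hT ht2r hrt2
    rw [hIt₂] at hdiff
    have heq : φ r = |∫ s in (t₂ - r)..t₂, (-(β * (1 - u s) * S s * I s))| := by
      simp only [hφdef]
      have : S (t₂ - r) = -∫ s in (t₂ - r)..t₂, (-(β * (1 - u s) * S s * I s)) := by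
        linarith
      rw [this, abs_neg]
    have hIA : IntervalIntegrable (fun s => A * |S s|) volume (t₂ - r) t₂ := by
      apply ContinuousOn.intervalIntegrable
      apply (continuousOn_const.mul ?_)
      apply ContinuousOn.abs
      apply hT.1.mono
      rw [uIcc_of_le hrt2]
      intro x hx; exact le_trans ht2r hx.1
    have hstep : |∫ s in (t₂ - r)..t₂, (-(β * (1 - u s) * S s * I s))|
        ≤ ∫ s in (t₂ - r)..t₂, A * |S s| := by
      have h1 : |∫ s in (t₂ - r)..t₂, (-(β * (1 - u s) * S s * I s))|
          ≤ ∫ s in (t₂ - r)..t₂, |(-(β * (1 - u s) * S s * I s))| := by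
        simpa only [Real.norm_eq_abs] using
          intervalIntegral.norm_integral_le_integral_norm (a := t₂ - r) (b := t₂)
            (f := fun s => -(β * (1 - u s) * S s * I s)) hrt2
      refine h1.trans (intervalIntegral.integral_mono_on hrt2
        ((FS_int hβ hμ hu hu0 hu1 hT ht2r hrt2).abs) hIA ?_)
      intro s hs
      have hs2 : s ∈ Icc 0 t₂ := ⟨le_trans ht2r hs.1, hs.2⟩
      have hIcC := hCI s hs2
      have h1u : |1 - u s| ≤ 1 := by
        rw [abs_le]; constructor <;> nlinarith [hu0 s, hu1 s]
      rw [abs_neg, abs_mul, abs_mul, abs_mul, abs_of_pos hβ]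
      have h2 : β * |1 - u s| * |S s| * |I s| ≤ β * 1 * |S s| * C := by
        gcongr <;> positivity
      rw [hAdef]
      nlinarith [abs_nonneg (S s)]
    have hcv : (∫ s in (0:ℝ)..r, A * φ s) = ∫ s in (t₂ - r)..t₂, A * |S s| := by
      have := intervalIntegral.integral_comp_sub_left (a := (0:ℝ)) (b := r)
        (fun s => A * |S s|) t₂
      simpa [hφdef] using this
    rw [zero_add, hcv, heq]
    exact hstep
  have hfin := gronwall_contOn ht₂.1 hA hφcont key t₂ ⟨ht₂.1, le_refl _⟩
  have h0 : |S 0| ≤ 0 := by simpa [hφdef] using hfin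
  rw [abs_of_pos hS0] at h0
  linarith

variable (hS0 : 0 < S 0) (hI0 : 0 < I 0)
include hS0 hI0

theorem S_mono : ∀ t₁ t₂ : ℝ, 0 ≤ t₁ → t₁ ≤ t₂ → S t₂ ≤ S t₁ := by
  intro t₁ t₂ h1 h12
  have hdiff := S_diff hβ hμ hu hu0 hu1 hT h1 h12
  have h0 : 0 ≤ ∫ s in t₁..t₂, β * (1 - u s) * S s * I s := by
    apply intervalIntegral.integral_nonneg h12
    intro s hs
    have hs0 : 0 ≤ s := le_trans h1 hs.1
    have := S_pos hβ hμ hu hu0 hu1 hT hS0 s hs0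
    have := I_pos hβ hμ hu hu0 hu1 hT hI0 s hs0
    have h1u : 0 ≤ 1 - u s := by linarith [hu1 s]
    positivity
  have hneg : (∫ s in t₁..t₂, (-(β * (1 - u s) * S s * I s)))
      = -∫ s in t₁..t₂, β * (1 - u s) * S s * I s := intervalIntegral.integral_neg
  linarith

theorem SI_mono : ∀ t₁ t₂ : ℝ, 0 ≤ t₁ → t₁ ≤ t₂ → S t₂ + I t₂ ≤ S t₁ + I t₁ := by
  intro t₁ t₂ h1 h12
  have hdS := S_diff hβ hμ hu hu0 hu1 hT h1 h12
  have hdI := I_diff hβ hμ hu hu0 hu1 hT h1 h12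
  have hsum : (∫ s in t₁..t₂, (-(μ * I s)))
      = (∫ s in t₁..t₂, (-(β * (1 - u s) * S s * I s)))
        + ∫ s in t₁..t₂, (β * (1 - u s) * S s * I s - μ * I s) := by
    rw [← intervalIntegral.integral_add (FS_int hβ hμ hu hu0 hu1 hT h1 h12)
      (FI_int hβ hμ hu hu0 hu1 hT h1 h12)]
    apply intervalIntegral.integral_congr
    intro s hs
    show -(μ * I s) = _
    ring
  have h0 : 0 ≤ ∫ s in t₁..t₂, μ * I s := by
    apply intervalIntegral.integral_nonneg h12
    intro s hs
    have := I_pos hβ hμ hu hu0 hu1 hT hI0 s (le_trans h1 hs.1)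
    positivity
  have hneg : (∫ s in t₁..t₂, (-(μ * I s)))
      = -∫ s in t₁..t₂, μ * I s := intervalIntegral.integral_neg
  linarith

theorem S_le : ∀ t, 0 ≤ t → S t ≤ S 0 :=
  fun t ht => S_mono hβ hμ hu hu0 hu1 hT hS0 hI0 0 t le_rfl ht

theorem I_le : ∀ t, 0 ≤ t → I t ≤ S 0 + I 0 := by
  intro t ht
  have h1 := SI_mono hβ hμ hu hu0 hu1 hT hS0 hI0 0 t le_rfl ht
  have h2 := S_pos hβ hμ hu hu0 hu1 hT hS0 t ht
  linarith

end Traj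


set_option maxHeartbeats 1000000 in
theorem compare {β μ : ℝ} (hβ : 0 < β) (hμ : 0 < μ)
    {u₁ u₂ S₁ I₁ S₂ I₂ : ℝ → ℝ}
    (hu₁ : Measurable u₁) (h10 : ∀ s, 0 ≤ u₁ s) (h11 : ∀ s, u₁ s ≤ 1)
    (hu₂ : Measurable u₂) (h20 : ∀ s, 0 ≤ u₂ s) (h21 : ∀ s, u₂ s ≤ 1)
    (hT₁ : IsRedTraj β μ u₁ S₁ I₁) (hT₂ : IsRedTraj β μ u₂ S₂ I₂)
    (hS1 : 0 < S₁ 0) (hI1 : 0 < I₁ 0) (heqS : S₂ 0 = S₁ 0) (heqI : I₂ 0 = I₁ 0)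
    {b δ : ℝ} (hb : 0 ≤ b) (hδ : 0 ≤ δ)
    (hdu : ∀ t ∈ Icc (0:ℝ) b, (∫ s in (0:ℝ)..t, |u₁ s - u₂ s|) ≤ δ) :
    ∀ t ∈ Icc (0:ℝ) b, |S₁ t - S₂ t| + |I₁ t - I₂ t| ≤
      (2 * β * (S₁ 0 + I₁ 0)^2 * δ) * Real.exp ((2 * (β * (S₁ 0 + I₁ 0) + μ)) * t) := by
  set B := S₁ 0 + I₁ 0 with hBdef
  have hB : 0 < B := by positivity
  set L := 2 * (β * B + μ) with hLdef
  have hL : 0 ≤ L := by positivity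
  set a := 2 * β * B^2 * δ with hadef
  have ha : 0 ≤ a := by positivity
  -- pointwise bounds
  have hS1b : ∀ s, 0 ≤ s → |S₁ s| ≤ B := fun s hs => by
    rw [abs_of_pos (S_pos hβ hμ hu₁ h10 h11 hT₁ hS1 s hs)]
    have := S_le hβ hμ hu₁ h10 h11 hT₁ hS1 hI1 s hs
    linarith
  have hI1b : ∀ s, 0 ≤ s → |I₁ s| ≤ B := fun s hs => by
    rw [abs_of_pos (I_pos hβ hμ hu₁ h10 h11 hT₁ hI1 s hs)]
    exact I_le hβ hμ hu₁ h10 h11 hT₁ hS1 hI1 s hs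
  have hS2' : 0 < S₂ 0 := heqS ▸ hS1
  have hI2' : 0 < I₂ 0 := heqI ▸ hI1
  have hS2b : ∀ s, 0 ≤ s → |S₂ s| ≤ B := fun s hs => by
    rw [abs_of_pos (S_pos hβ hμ hu₂ h20 h21 hT₂ hS2' s hs)]
    have := S_le hβ hμ hu₂ h20 h21 hT₂ hS2' hI2' s hs
    rw [heqS] at this
    linarith
  have hI2b : ∀ s, 0 ≤ s → |I₂ s| ≤ B := fun s hs => by
    rw [abs_of_pos (I_pos hβ hμ hu₂ h20 h21 hT₂ hI2' s hs)]
    have := I_le hβ hμ hu₂ h20 h21 hT₂ hS2' hI2' s hs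
    rw [heqS, heqI] at this
    exact this
  set φ : ℝ → ℝ := fun t => |S₁ t - S₂ t| + |I₁ t - I₂ t| with hφdef
  have hφc : ContinuousOn φ (Icc 0 b) :=
    (((hT₁.1.sub hT₂.1).abs.add ((hT₁.2.1.sub hT₂.2.1)).abs)).mono Icc_subset_Ici_self
  have hφnn : ∀ s, 0 ≤ φ s := fun s => add_nonneg (abs_nonneg _) (abs_nonneg _)
  -- the pointwise integrand bound
  have hptS : ∀ s, 0 ≤ s →
      |(-(β * (1 - u₁ s) * S₁ s * I₁ s)) - (-(β * (1 - u₂ s) * S₂ s * I₂ s))| ≤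
        (β * B + μ) * φ s + β * B^2 * |u₁ s - u₂ s| := by
    intro s hs
    have e : (-(β * (1 - u₁ s) * S₁ s * I₁ s)) - (-(β * (1 - u₂ s) * S₂ s * I₂ s))
        = -(β * ((1 - u₁ s) * (S₁ s * (I₁ s - I₂ s) + (S₁ s - S₂ s) * I₂ s)
            + (u₂ s - u₁ s) * (S₂ s * I₂ s))) := by ring
    rw [e, abs_neg, abs_mul, abs_of_pos hβ]
    have h1u : |1 - u₁ s| ≤ 1 := by
      rw [abs_le]; constructor <;> nlinarith [h10 s, h11 s]
    have h2 : |S₁ s * (I₁ s - I₂ s) + (S₁ s - S₂ s) * I₂ s|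
        ≤ B * |I₁ s - I₂ s| + |S₁ s - S₂ s| * B := by
      refine (abs_add_le _ _).trans ?_
      rw [abs_mul, abs_mul]
      gcongr
      · exact hS1b s hs
      · exact hI2b s hs
    have hX : |(1 - u₁ s) * (S₁ s * (I₁ s - I₂ s) + (S₁ s - S₂ s) * I₂ s)|
        ≤ 1 * (B * |I₁ s - I₂ s| + |S₁ s - S₂ s| * B) := by
      rw [abs_mul]
      exact mul_le_mul h1u h2 (abs_nonneg _) zero_le_one
    have hY : |(u₂ s - u₁ s) * (S₂ s * I₂ s)| ≤ |u₁ s - u₂ s| * (B * B) := by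
      rw [abs_mul, abs_sub_comm (u₂ s) (u₁ s), abs_mul]
      exact mul_le_mul_of_nonneg_left
        (mul_le_mul (hS2b s hs) (hI2b s hs) (abs_nonneg _) hB.le) (abs_nonneg _)
    have h3 : |(1 - u₁ s) * (S₁ s * (I₁ s - I₂ s) + (S₁ s - S₂ s) * I₂ s)
        + (u₂ s - u₁ s) * (S₂ s * I₂ s)|
        ≤ 1 * (B * |I₁ s - I₂ s| + |S₁ s - S₂ s| * B) + |u₁ s - u₂ s| * (B * B) :=
      (abs_add_le _ _).trans (add_le_add hX hY)
    have h4 := mul_le_mul_of_nonneg_left h3 hβ.le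
    have hμφ : 0 ≤ μ * (|S₁ s - S₂ s| + |I₁ s - I₂ s|) :=
      mul_nonneg hμ.le (add_nonneg (abs_nonneg _) (abs_nonneg _))
    simp only [hφdef]
    calc β * |(1 - u₁ s) * (S₁ s * (I₁ s - I₂ s) + (S₁ s - S₂ s) * I₂ s)
          + (u₂ s - u₁ s) * (S₂ s * I₂ s)|
        ≤ β * (1 * (B * |I₁ s - I₂ s| + |S₁ s - S₂ s| * B) + |u₁ s - u₂ s| * (B * B)) := h4
      _ ≤ β * (1 * (B * |I₁ s - I₂ s| + |S₁ s - S₂ s| * B) + |u₁ s - u₂ s| * (B * B))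
          + μ * (|S₁ s - S₂ s| + |I₁ s - I₂ s|) := le_add_of_nonneg_right hμφ
      _ = (β * B + μ) * (|S₁ s - S₂ s| + |I₁ s - I₂ s|) + β * B ^ 2 * |u₁ s - u₂ s| := by
          ring
  have hptI : ∀ s, 0 ≤ s →
      |(β * (1 - u₁ s) * S₁ s * I₁ s - μ * I₁ s) - (β * (1 - u₂ s) * S₂ s * I₂ s - μ * I₂ s)| ≤
        (β * B + μ) * φ s + β * B^2 * |u₁ s - u₂ s| := by
    intro s hs
    have e : (β * (1 - u₁ s) * S₁ s * I₁ s - μ * I₁ s)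
          - (β * (1 - u₂ s) * S₂ s * I₂ s - μ * I₂ s)
        = (β * ((1 - u₁ s) * (S₁ s * (I₁ s - I₂ s) + (S₁ s - S₂ s) * I₂ s)
            + (u₂ s - u₁ s) * (S₂ s * I₂ s))) - μ * (I₁ s - I₂ s) := by ring
    rw [e]
    refine (abs_sub _ _).trans ?_
    rw [abs_mul, abs_of_pos hβ, abs_mul, abs_of_pos hμ]
    have h1u : |1 - u₁ s| ≤ 1 := by
      rw [abs_le]; constructor <;> nlinarith [h10 s, h11 s]
    have h2 : |S₁ s * (I₁ s - I₂ s) + (S₁ s - S₂ s) * I₂ s|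
        ≤ B * |I₁ s - I₂ s| + |S₁ s - S₂ s| * B := by
      refine (abs_add_le _ _).trans ?_
      rw [abs_mul, abs_mul]
      gcongr
      · exact hS1b s hs
      · exact hI2b s hs
    have hX : |(1 - u₁ s) * (S₁ s * (I₁ s - I₂ s) + (S₁ s - S₂ s) * I₂ s)|
        ≤ 1 * (B * |I₁ s - I₂ s| + |S₁ s - S₂ s| * B) := by
      rw [abs_mul]
      exact mul_le_mul h1u h2 (abs_nonneg _) zero_le_one
    have hY : |(u₂ s - u₁ s) * (S₂ s * I₂ s)| ≤ |u₁ s - u₂ s| * (B * B) := by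
      rw [abs_mul, abs_sub_comm (u₂ s) (u₁ s), abs_mul]
      exact mul_le_mul_of_nonneg_left
        (mul_le_mul (hS2b s hs) (hI2b s hs) (abs_nonneg _) hB.le) (abs_nonneg _)
    have h3 : |(1 - u₁ s) * (S₁ s * (I₁ s - I₂ s) + (S₁ s - S₂ s) * I₂ s)
        + (u₂ s - u₁ s) * (S₂ s * I₂ s)|
        ≤ 1 * (B * |I₁ s - I₂ s| + |S₁ s - S₂ s| * B) + |u₁ s - u₂ s| * (B * B) :=
      (abs_add_le _ _).trans (add_le_add hX hY)
    have h4 := mul_le_mul_of_nonneg_left h3 hβ.le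
    have h5 : μ * |I₁ s - I₂ s| ≤ μ * (|S₁ s - S₂ s| + |I₁ s - I₂ s|) := by
      apply mul_le_mul_of_nonneg_left _ hμ.le
      linarith [abs_nonneg (S₁ s - S₂ s)]
    simp only [hφdef]
    calc β * |(1 - u₁ s) * (S₁ s * (I₁ s - I₂ s) + (S₁ s - S₂ s) * I₂ s)
          + (u₂ s - u₁ s) * (S₂ s * I₂ s)| + μ * |I₁ s - I₂ s|
        ≤ β * (1 * (B * |I₁ s - I₂ s| + |S₁ s - S₂ s| * B) + |u₁ s - u₂ s| * (B * B))
          + μ * (|S₁ s - S₂ s| + |I₁ s - I₂ s|) := add_le_add h4 h5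
      _ = (β * B + μ) * (|S₁ s - S₂ s| + |I₁ s - I₂ s|) + β * B ^ 2 * |u₁ s - u₂ s| := by
          ring
  -- integrability of G
  have hint1 : ∀ t, 0 ≤ t → t ≤ b →
      IntervalIntegrable (fun s => (β * B + μ) * φ s) volume 0 t := by
    intro t ht htb
    refine (continuousOn_const.mul (hφc.mono ?_)).intervalIntegrable
    rw [uIcc_of_le ht]
    exact Icc_subset_Icc le_rfl htb
  have hint2 : ∀ t, 0 ≤ t →
      IntervalIntegrable (fun s => β * B^2 * |u₁ s - u₂ s|) volume 0 t := by
    intro t ht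
    refine integr_aux ht ((measurable_const.mul (hu₁.sub hu₂).abs).aestronglyMeasurable.restrict)
      (C := β * B^2 * 2) fun s hs => ?_
    rw [abs_mul, abs_of_nonneg (by positivity : (0:ℝ) ≤ β * B^2), abs_abs]
    have : |u₁ s - u₂ s| ≤ 2 := by
      refine (abs_sub _ _).trans ?_
      rw [abs_of_nonneg (h10 s), abs_of_nonneg (h20 s)]
      linarith [h11 s, h21 s]
    exact mul_le_mul_of_nonneg_left this (by positivity)
  have key : ∀ t ∈ Icc (0:ℝ) b, φ t ≤ a + ∫ s in (0:ℝ)..t, L * φ s := by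
    intro t ht
    have ht0 := ht.1
    have hS1e := hT₁.2.2.1 t ht0
    have hS2e := hT₂.2.2.1 t ht0
    have hI1e := hT₁.2.2.2 t ht0
    have hI2e := hT₂.2.2.2 t ht0
    have hFS1 := FS_int hβ hμ hu₁ h10 h11 hT₁ le_rfl ht0
    have hFS2 := FS_int hβ hμ hu₂ h20 h21 hT₂ le_rfl ht0
    have hFI1 := FI_int hβ hμ hu₁ h10 h11 hT₁ le_rfl ht0
    have hFI2 := FI_int hβ hμ hu₂ h20 h21 hT₂ le_rfl ht0
    have hGi : IntervalIntegrable
        (fun s => (β * B + μ) * φ s + β * B^2 * |u₁ s - u₂ s|) volume 0 t :=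
      (hint1 t ht0 ht.2).add (hint2 t ht0)
    have hdS : S₁ t - S₂ t = ∫ s in (0:ℝ)..t,
        ((-(β * (1 - u₁ s) * S₁ s * I₁ s)) - (-(β * (1 - u₂ s) * S₂ s * I₂ s))) := by
      rw [intervalIntegral.integral_sub hFS1 hFS2, hS1e, hS2e, heqS]; ring
    have hdI : I₁ t - I₂ t = ∫ s in (0:ℝ)..t,
        ((β * (1 - u₁ s) * S₁ s * I₁ s - μ * I₁ s)
          - (β * (1 - u₂ s) * S₂ s * I₂ s - μ * I₂ s)) := by
      rw [intervalIntegral.integral_sub hFI1 hFI2, hI1e, hI2e, heqI]; ring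
    have hbS : |S₁ t - S₂ t| ≤ ∫ s in (0:ℝ)..t,
        ((β * B + μ) * φ s + β * B^2 * |u₁ s - u₂ s|) := by
      rw [hdS]
      refine le_trans (by
        simpa only [Real.norm_eq_abs] using
          intervalIntegral.norm_integral_le_integral_norm
            (f := fun s => (-(β * (1 - u₁ s) * S₁ s * I₁ s))
              - (-(β * (1 - u₂ s) * S₂ s * I₂ s))) ht0) ?_
      refine intervalIntegral.integral_mono_on ht0 ((hFS1.sub hFS2).abs) hGi ?_
      intro s hs
      exact hptS s hs.1
    have hbI : |I₁ t - I₂ t| ≤ ∫ s in (0:ℝ)..t,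
        ((β * B + μ) * φ s + β * B^2 * |u₁ s - u₂ s|) := by
      rw [hdI]
      refine le_trans (by
        simpa only [Real.norm_eq_abs] using
          intervalIntegral.norm_integral_le_integral_norm
            (f := fun s => (β * (1 - u₁ s) * S₁ s * I₁ s - μ * I₁ s)
              - (β * (1 - u₂ s) * S₂ s * I₂ s - μ * I₂ s)) ht0) ?_
      refine intervalIntegral.integral_mono_on ht0 ((hFI1.sub hFI2).abs) hGi ?_
      intro s hs
      exact hptI s hs.1
    have hsplit : (∫ s in (0:ℝ)..t, ((β * B + μ) * φ s + β * B^2 * |u₁ s - u₂ s|))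
        = (∫ s in (0:ℝ)..t, (β * B + μ) * φ s)
          + β * B^2 * ∫ s in (0:ℝ)..t, |u₁ s - u₂ s| := by
      rw [intervalIntegral.integral_add (hint1 t ht0 ht.2) (hint2 t ht0),
        intervalIntegral.integral_const_mul, intervalIntegral.integral_const_mul]
    have hDU : (∫ s in (0:ℝ)..t, |u₁ s - u₂ s|) ≤ δ := hdu t ht
    have hL2 : (∫ s in (0:ℝ)..t, L * φ s)
        = 2 * ∫ s in (0:ℝ)..t, (β * B + μ) * φ s := by
      rw [← intervalIntegral.integral_const_mul]
      apply intervalIntegral.integral_congr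
      intro s hs
      show L * φ s = 2 * ((β * B + μ) * φ s)
      rw [hLdef]; ring
    have hsum := add_le_add hbS hbI
    have hmul : β * B^2 * (∫ s in (0:ℝ)..t, |u₁ s - u₂ s|) ≤ β * B^2 * δ :=
      mul_le_mul_of_nonneg_left hDU (by positivity)
    show |S₁ t - S₂ t| + |I₁ t - I₂ t| ≤ a + ∫ s in (0:ℝ)..t, L * φ s
    rw [hL2, hadef]
    rw [hsplit] at hsum
    linarith
  exact gronwall_contOn hb hL hφc key


theorem delayed_meas (umax τ : ℝ) : Measurable (delayedControl umax τ) :=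
  Measurable.ite measurableSet_Iio measurable_const measurable_const

theorem delayed_nonneg {umax : ℝ} (h : 0 ≤ umax) (τ : ℝ) : ∀ s, 0 ≤ delayedControl umax τ s := by
  intro s; unfold delayedControl; split_ifs <;> simp [h]

theorem delayed_le_one {umax : ℝ} (h : umax ≤ 1) (τ : ℝ) : ∀ s, delayedControl umax τ s ≤ 1 := by
  intro s; unfold delayedControl; split_ifs <;> linarith

theorem delayed_le_umax {umax : ℝ} (h : 0 ≤ umax) (τ : ℝ) : ∀ s, delayedControl umax τ s ≤ umax := by
  intro s; unfold delayedControl; split_ifs <;> linarith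

/-- control difference integral bound -/
theorem delayed_du {umax : ℝ} (h0 : 0 ≤ umax) (h1 : umax ≤ 1) (τ τ' : ℝ) :
    ∀ t, 0 ≤ t →
      (∫ s in (0:ℝ)..t, |delayedControl umax τ s - delayedControl umax τ' s|) ≤ |τ - τ'| := by
  intro t ht
  set g : ℝ → ℝ := (Ico (min τ τ') (max τ τ')).indicator (fun _ => (1:ℝ)) with hgdef
  have hgm : Measurable g := measurable_const.indicator measurableSet_Ico
  have hgb : ∀ s, |g s| ≤ 1 := by
    intro s
    rw [hgdef]
    by_cases hmem : s ∈ Ico (min τ τ') (max τ τ')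
    · rw [Set.indicator_of_mem hmem]; simp
    · rw [Set.indicator_of_notMem hmem]; simp
  have hptwise : ∀ s, |delayedControl umax τ s - delayedControl umax τ' s| ≤ g s := by
    intro s
    rw [hgdef]
    unfold delayedControl
    by_cases hmem : s ∈ Ico (min τ τ') (max τ τ')
    · rw [Set.indicator_of_mem hmem]
      split_ifs <;> simp <;> rw [abs_of_nonneg h0] <;> linarith
    · rw [Set.indicator_of_notMem hmem]
      simp only [mem_Ico, not_and_or, not_le, not_lt] at hmem
      rcases hmem with hlt | hge
      · rw [lt_min_iff] at hlt
        rw [if_pos hlt.1, if_pos hlt.2]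
        simp
      · rw [max_le_iff] at hge
        rw [if_neg (not_lt.2 hge.1), if_neg (not_lt.2 hge.2)]
        simp
  have hudm : Measurable fun s => |delayedControl umax τ s - delayedControl umax τ' s| :=
    ((delayed_meas umax τ).sub (delayed_meas umax τ')).abs
  have hint1 : IntervalIntegrable
      (fun s => |delayedControl umax τ s - delayedControl umax τ' s|) volume 0 t := by
    refine integr_aux ht hudm.aestronglyMeasurable.restrict (C := 2) fun s hs => ?_
    rw [abs_abs]
    refine (abs_sub _ _).trans ?_
    rw [abs_of_nonneg (delayed_nonneg h0 τ s), abs_of_nonneg (delayed_nonneg h0 τ' s)]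
    linarith [delayed_le_one h1 τ s, delayed_le_one h1 τ' s]
  have hint2 : IntervalIntegrable g volume 0 t :=
    integr_aux ht hgm.aestronglyMeasurable.restrict (C := 1) fun s _ => hgb s
  have h2 : (∫ s in (0:ℝ)..t, |delayedControl umax τ s - delayedControl umax τ' s|)
      ≤ ∫ s in (0:ℝ)..t, g s :=
    intervalIntegral.integral_mono_on ht hint1 hint2 fun s _ => hptwise s
  have h3 : (∫ s in (0:ℝ)..t, g s) ≤ |τ - τ'| := by
    rw [hgdef, intervalIntegral.integral_of_le ht, MeasureTheory.integral_indicator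
      measurableSet_Ico]
    rw [MeasureTheory.setIntegral_const, smul_eq_mul, mul_one]
    rw [measureReal_def, Measure.restrict_apply measurableSet_Ico]
    have hle : volume (Ico (min τ τ') (max τ τ') ∩ Ioc 0 t) ≤ volume (Ico (min τ τ') (max τ τ')) :=
      measure_mono Set.inter_subset_left
    have hfin : volume (Ico (min τ τ') (max τ τ')) = ENNReal.ofReal (max τ τ' - min τ τ') :=
      Real.volume_Ico
    calc (volume (Ico (min τ τ') (max τ τ') ∩ Ioc 0 t)).toReal
        ≤ (volume (Ico (min τ τ') (max τ τ'))).toReal := by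
          apply ENNReal.toReal_mono _ hle
          rw [hfin]; exact ENNReal.ofReal_ne_top
      _ = max τ τ' - min τ τ' := by
          rw [hfin, ENNReal.toReal_ofReal]
          simp [le_max_left, le_max_right, sub_nonneg, min_le_max]
      _ = |τ - τ'| := by rw [max_sub_min_eq_abs, abs_sub_comm]
  exact h2.trans h3

theorem erad_unique {I : ℝ → ℝ} {ε T T' : ℝ}
    (h : IsEradicationTime I ε T) (h' : IsEradicationTime I ε T') : T = T' := by
  rcases lt_trichotomy T T' with hlt | heq | hgt
  · exact absurd h.2.1 (ne_of_gt (h'.2.2 T h.1 hlt))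
  · exact heq
  · exact absurd h'.2.1 (ne_of_gt (h.2.2 T' h'.1 hgt))



set_option maxHeartbeats 1000000 in
/-- For the reduction-of-transmission SIR system, the eradication time `J(τ)` of the delayed
bang-bang control `u(·;τ)` is continuous on `[0, T_unc]` and attains a minimum there; in
particular a time-optimal control exists within the class of delayed bang-bang controls. -/
theorem reduction_delayed_eradication_time_continuous_attains_min
    (β μ umax ε S₀ I₀ : ℝ)
    (hβ : 0 < β) (hμ : 0 < μ) (humax : 0 < umax) (humax1 : umax ≤ 1) (hε : 0 < ε)
    (hS₀ : 0 < S₀) (hI₀ : ε < I₀)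
    (S I : ℝ → ℝ → ℝ)
    (hfam : ∀ τ, 0 ≤ τ → IsRedTraj β μ (delayedControl umax τ) (S τ) (I τ))
    (hinit : ∀ τ, 0 ≤ τ → S τ 0 = S₀ ∧ I τ 0 = I₀)
    (J : ℝ → ℝ)
    (hJ : ∀ τ, 0 ≤ τ → IsEradicationTime (I τ) ε (J τ))
    (Su Iu : ℝ → ℝ)
    (huncontrolled : IsRedTraj β μ (fun _ => 0) Su Iu)
    (huinit : Su 0 = S₀ ∧ Iu 0 = I₀)
    (Tunc : ℝ) (hTunc : IsEradicationTime Iu ε Tunc) :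
    ContinuousOn J (Set.Icc 0 Tunc) ∧
    ∃ τstar ∈ Set.Icc (0:ℝ) Tunc,
      (∀ τ ∈ Set.Icc (0:ℝ) Tunc, J τstar ≤ J τ) ∧
      (∀ τ, 0 ≤ τ → J τstar ≤ J τ) := by
  have hI₀pos : 0 < I₀ := lt_trans hε hI₀
  set L : ℝ := 2 * (β * (S₀ + I₀) + μ) with hLdef
  have hum : ∀ τ : ℝ, Measurable (delayedControl umax τ) := delayed_meas umax
  have hu0 : ∀ τ : ℝ, ∀ s, 0 ≤ delayedControl umax τ s := fun τ => delayed_nonneg humax.le τ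
  have hu1 : ∀ τ : ℝ, ∀ s, delayedControl umax τ s ≤ 1 := fun τ => delayed_le_one humax1 τ
  -- quantitative comparison of two delayed trajectories
  have hcmp : ∀ τ₁ τ₂ : ℝ, 0 ≤ τ₁ → 0 ≤ τ₂ → ∀ b, 0 ≤ b → ∀ t ∈ Icc (0:ℝ) b,
      |I τ₁ t - I τ₂ t| ≤ (2 * β * (S₀ + I₀)^2 * |τ₁ - τ₂|) * Real.exp (L * b) := by
    intro τ₁ τ₂ h1 h2 b hb t htmem
    have hc := compare hβ hμ (hum τ₁) (hu0 τ₁) (hu1 τ₁) (hum τ₂) (hu0 τ₂) (hu1 τ₂)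
      (hfam τ₁ h1) (hfam τ₂ h2) (by rw [(hinit τ₁ h1).1]; exact hS₀)
      (by rw [(hinit τ₁ h1).2]; exact hI₀pos)
      (by rw [(hinit τ₂ h2).1, (hinit τ₁ h1).1])
      (by rw [(hinit τ₂ h2).2, (hinit τ₁ h1).2])
      hb (abs_nonneg (τ₁ - τ₂))
      (fun t' ht' => delayed_du humax.le humax1 τ₁ τ₂ t' ht'.1) t htmem
    rw [(hinit τ₁ h1).1, (hinit τ₁ h1).2] at hc
    have hexp : Real.exp ((2 * (β * (S₀ + I₀) + μ)) * t) ≤ Real.exp (L * b) := by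
      rw [hLdef]
      exact Real.exp_le_exp.2 (mul_le_mul_of_nonneg_left htmem.2 (by positivity))
    calc |I τ₁ t - I τ₂ t|
        ≤ |S τ₁ t - S τ₂ t| + |I τ₁ t - I τ₂ t| := le_add_of_nonneg_left (abs_nonneg _)
      _ ≤ (2 * β * (S₀ + I₀)^2 * |τ₁ - τ₂|)
            * Real.exp ((2 * (β * (S₀ + I₀) + μ)) * t) := hc
      _ ≤ (2 * β * (S₀ + I₀)^2 * |τ₁ - τ₂|) * Real.exp (L * b) :=
          mul_le_mul_of_nonneg_left hexp (by positivity)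
  -- agreement with the uncontrolled trajectory up to time τ
  have hagree : ∀ τ, 0 ≤ τ → ∀ t, 0 ≤ t → t ≤ τ → I τ t = Iu t := by
    intro τ hτ t ht htτ
    have hdu0 : ∀ t' ∈ Icc (0:ℝ) τ,
        (∫ s in (0:ℝ)..t', |delayedControl umax τ s - (fun _ : ℝ => (0:ℝ)) s|) ≤ 0 := by
      intro t' ht'
      have hea : ∀ᵐ s ∂(volume.restrict (Ioc (0:ℝ) t')),
          |delayedControl umax τ s - (fun _ : ℝ => (0:ℝ)) s| = 0 := by
        have hane : ∀ᵐ s : ℝ ∂volume, s ≠ τ := by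
          rw [ae_iff]
          have hset : {x : ℝ | ¬ x ≠ τ} = {τ} := by ext x; simp
          rw [hset]
          exact measure_singleton τ
        have hane' := ae_restrict_of_ae (μ := volume) (s := Ioc (0:ℝ) t') hane
        filter_upwards [hane', self_mem_ae_restrict measurableSet_Ioc] with s hsne hsmem
        have hsτ : s < τ := lt_of_le_of_ne (le_trans hsmem.2 ht'.2) hsne
        simp [delayedControl, if_pos hsτ]
      have hz : (∫ s in (0:ℝ)..t', |delayedControl umax τ s - (fun _ : ℝ => (0:ℝ)) s|) = 0 := by
        rw [intervalIntegral.integral_of_le ht'.1]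
        exact MeasureTheory.integral_eq_zero_of_ae hea
      exact le_of_eq hz
    have hc := compare hβ hμ (hum τ) (hu0 τ) (hu1 τ)
      measurable_const (fun _ => le_refl (0:ℝ)) (fun _ => zero_le_one)
      (hfam τ hτ) huncontrolled (by rw [(hinit τ hτ).1]; exact hS₀)
      (by rw [(hinit τ hτ).2]; exact hI₀pos)
      (by rw [huinit.1, (hinit τ hτ).1]) (by rw [huinit.2, (hinit τ hτ).2])
      hτ le_rfl hdu0 t ⟨ht, htτ⟩
    have h0 : |S τ t - Su t| + |I τ t - Iu t| ≤ 0 := by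
      calc |S τ t - Su t| + |I τ t - Iu t| ≤ _ := hc
        _ = 0 := by ring
    have ha1 := abs_nonneg (S τ t - Su t)
    have ha2 := abs_nonneg (I τ t - Iu t)
    have : |I τ t - Iu t| = 0 := by linarith
    have := abs_eq_zero.1 this
    linarith [sub_eq_zero.1 this]
  -- per-trajectory facts
  have htrajS : ∀ τ, 0 ≤ τ → ∀ t, 0 ≤ t → 0 < S τ t := fun τ hτ =>
    S_pos hβ hμ (hum τ) (hu0 τ) (hu1 τ) (hfam τ hτ) (by rw [(hinit τ hτ).1]; exact hS₀)
  have htrajI : ∀ τ, 0 ≤ τ → ∀ t, 0 ≤ t → 0 < I τ t := fun τ hτ =>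
    I_pos hβ hμ (hum τ) (hu0 τ) (hu1 τ) (hfam τ hτ) (by rw [(hinit τ hτ).2]; exact hI₀pos)
  have htrajSmono : ∀ τ, 0 ≤ τ → ∀ t₁ t₂, 0 ≤ t₁ → t₁ ≤ t₂ → S τ t₂ ≤ S τ t₁ := fun τ hτ =>
    S_mono hβ hμ (hum τ) (hu0 τ) (hu1 τ) (hfam τ hτ)
      (by rw [(hinit τ hτ).1]; exact hS₀) (by rw [(hinit τ hτ).2]; exact hI₀pos)
  -- basic facts about eradication times
  have hJpos : ∀ τ, 0 ≤ τ → 0 < J τ := by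
    intro τ hτ
    rcases eq_or_lt_of_le (hJ τ hτ).1 with h | h
    · exfalso
      have h2 := (hJ τ hτ).2.1
      rw [← h, (hinit τ hτ).2] at h2
      linarith
    · exact h
  have hJge : ∀ τ ∈ Icc (0:ℝ) Tunc, τ ≤ J τ := by
    intro τ hmem
    by_contra hlt
    push_neg at hlt
    have h0J := (hJ τ hmem.1).1
    have hag := hagree τ hmem.1 (J τ) h0J hlt.le
    have hIε := (hJ τ hmem.1).2.1
    have hgt := hTunc.2.2 (J τ) h0J (lt_of_lt_of_le hlt hmem.2)
    rw [← hag] at hgt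
    linarith
  have hJT : ∀ τ, Tunc ≤ τ → J τ = Tunc := by
    intro τ hτ'
    have hτ0 : 0 ≤ τ := hTunc.1.trans hτ'
    have herad : IsEradicationTime (I τ) ε Tunc := by
      refine ⟨hTunc.1, ?_, ?_⟩
      · rw [hagree τ hτ0 Tunc hTunc.1 hτ']
        exact hTunc.2.1
      · intro t ht htT
        rw [hagree τ hτ0 t ht (le_trans htT.le hτ')]
        exact hTunc.2.2 t ht htT
    exact erad_unique (hJ τ hτ0) herad
  -- transversality: strictly below ε after the eradication time
  have htrans : ∀ τ ∈ Icc (0:ℝ) Tunc, ∀ t, J τ < t → I τ t < ε := by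
    intro τ hmem t htJ
    have hτ0 : 0 ≤ τ := hmem.1
    have hT0 : 0 ≤ J τ := (hJ τ hτ0).1
    have hτT : τ ≤ J τ := hJge τ hmem
    have htraj := hfam τ hτ0
    set T := J τ with hTdef
    set c₀ : ℝ := β * (1 - umax) * S τ T - μ with hc₀def
    have hc0 : c₀ < 0 := by
      by_contra hge
      rw [not_lt] at hge
      have hnn : 0 ≤ ∫ s in (0:ℝ)..T,
          (β * (1 - delayedControl umax τ s) * S τ s * I τ s - μ * I τ s) := by
        apply intervalIntegral.integral_nonneg hT0
        intro s hs
        have hs0 : 0 ≤ s := hs.1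
        have hSs := htrajS τ hτ0 s hs0
        have hIs := htrajI τ hτ0 s hs0
        have hST := htrajS τ hτ0 T hT0
        have hSmono := htrajSmono τ hτ0 s T hs0 hs.2
        have husle : delayedControl umax τ s ≤ umax := delayed_le_umax humax.le τ s
        have h1u : (0:ℝ) ≤ 1 - umax := by linarith
        have hkey : β * (1 - umax) * S τ T ≤ β * (1 - delayedControl umax τ s) * S τ s := by
          apply mul_le_mul _ hSmono hST.le
          · exact mul_nonneg hβ.le (by linarith [hu1 τ s])
          · exact mul_le_mul_of_nonneg_left (by linarith) hβ.le
        have hfac : 0 ≤ β * (1 - delayedControl umax τ s) * S τ s - μ := by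
          rw [hc₀def] at hge
          linarith
        nlinarith [mul_nonneg hfac hIs.le]
      have heq := (hfam τ hτ0).2.2.2 T hT0
      rw [(hinit τ hτ0).2] at heq
      have hIε := (hJ τ hτ0).2.1
      rw [← hTdef] at hIε
      linarith
    have ht0 : 0 ≤ t := hT0.trans htJ.le
    have hIT : I τ T = ε := (hJ τ hτ0).2.1
    have hdiffI := I_diff hβ hμ (hum τ) (hu0 τ) (hu1 τ) htraj hT0 htJ.le
    rw [hIT] at hdiffI
    have hptw : ∀ s ∈ Icc T t,
        (β * (1 - delayedControl umax τ s) * S τ s * I τ s - μ * I τ s) ≤ c₀ * I τ s := by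
      intro s hs
      have hs0 : 0 ≤ s := hT0.trans hs.1
      have hus : delayedControl umax τ s = umax := if_neg (not_lt.2 (hτT.trans hs.1))
      have hSmono := htrajSmono τ hτ0 T s hT0 hs.1
      have hIs := htrajI τ hτ0 s hs0
      rw [hus]
      have h1u : (0:ℝ) ≤ 1 - umax := by linarith
      have hkey : β * (1 - umax) * S τ s ≤ β * (1 - umax) * S τ T :=
        mul_le_mul_of_nonneg_left hSmono (by positivity)
      rw [hc₀def]
      nlinarith [hIs.le, mul_le_mul_of_nonneg_right hkey hIs.le]
    have hci : IntervalIntegrable (fun s => c₀ * I τ s) volume T t := by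
      apply ContinuousOn.intervalIntegrable
      apply continuousOn_const.mul (htraj.2.1.mono ?_)
      rw [uIcc_of_le htJ.le]
      intro x hx
      exact (hT0.trans hx.1 : (0:ℝ) ≤ x)
    have hmono := intervalIntegral.integral_mono_on htJ.le
      (FI_int hβ hμ (hum τ) (hu0 τ) (hu1 τ) htraj hT0 htJ.le) hci hptw
    have hIint : IntervalIntegrable (fun s => I τ s) volume T t := by
      apply ContinuousOn.intervalIntegrable
      apply htraj.2.1.mono
      rw [uIcc_of_le htJ.le]
      intro x hx
      exact (hT0.trans hx.1 : (0:ℝ) ≤ x)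
    have hIpos : 0 < ∫ s in T..t, I τ s :=
      intervalIntegral_pos_of_pos_on hIint
        (fun x hx => htrajI τ hτ0 x (hT0.trans hx.1.le)) htJ
    have hcm : (∫ s in T..t, c₀ * I τ s) = c₀ * ∫ s in T..t, I τ s :=
      intervalIntegral.integral_const_mul c₀ _
    have hneg : c₀ * ∫ s in T..t, I τ s < 0 := mul_neg_of_neg_of_pos hc0 hIpos
    rw [hcm] at hmono
    linarith
  -- continuity of J on [0, Tunc]
  have hJcont : ContinuousOn J (Icc 0 Tunc) := by
    rw [Metric.continuousOn_iff]
    intro τ₀ hτ₀ η hη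
    set T₀ := J τ₀ with hT₀def
    have hT₀pos : 0 < T₀ := hJpos τ₀ hτ₀.1
    set η' := min (η/2) (T₀/2) with hη'def
    have hη'pos : 0 < η' := lt_min (by linarith) (by linarith)
    have hη'T : η' ≤ T₀/2 := min_le_right _ _
    have hη'η : η' ≤ η/2 := min_le_left _ _
    set b := T₀ + η' with hbdef
    have hb0 : (0:ℝ) ≤ b := by linarith
    have hTη0 : (0:ℝ) ≤ T₀ - η' := by linarith
    obtain ⟨x₀, hx₀mem, hx₀min⟩ := isCompact_Icc.exists_isMinOn
      (nonempty_Icc.2 hTη0)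
      ((hfam τ₀ hτ₀.1).2.1.mono (Icc_subset_Ici_self : Icc (0:ℝ) (T₀ - η') ⊆ Ici 0))
    set m := I τ₀ x₀ with hmdef
    have hmgt : ε < m := (hJ τ₀ hτ₀.1).2.2 x₀ hx₀mem.1 (by linarith [hx₀mem.2])
    have hbI : I τ₀ b < ε := htrans τ₀ hτ₀ b (by rw [hbdef, ← hT₀def]; linarith)
    set C := 2 * β * (S₀ + I₀)^2 * Real.exp (L * b) with hCdef
    have hC0 : 0 ≤ C := by positivity
    have hC1 : 0 < C + 1 := by linarith
    set δ := min ((m - ε)/(C+1)) ((ε - I τ₀ b)/(C+1)) with hδdef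
    have hδpos : 0 < δ := lt_min (div_pos (by linarith) hC1) (div_pos (by linarith) hC1)
    refine ⟨δ, hδpos, ?_⟩
    intro τ hτmem hdist
    have habs : |τ - τ₀| < δ := by rwa [Real.dist_eq] at hdist
    have hclose : ∀ t ∈ Icc (0:ℝ) b, |I τ t - I τ₀ t| < min (m - ε) (ε - I τ₀ b) := by
      intro t htmem
      have h1 := hcmp τ τ₀ hτmem.1 hτ₀.1 b hb0 t htmem
      have heqC : (2 * β * (S₀ + I₀)^2 * |τ - τ₀|) * Real.exp (L * b) = C * |τ - τ₀| := by
        rw [hCdef]; ring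
      rw [heqC] at h1
      have h2 : C * |τ - τ₀| < (C+1) * δ := by nlinarith [abs_nonneg (τ - τ₀)]
      have h3 : (C+1)*δ ≤ m - ε := by
        calc (C+1)*δ ≤ (C+1)*((m - ε)/(C+1)) :=
              mul_le_mul_of_nonneg_left (min_le_left _ _) hC1.le
          _ = m - ε := by field_simp
      have h4 : (C+1)*δ ≤ ε - I τ₀ b := by
        calc (C+1)*δ ≤ (C+1)*((ε - I τ₀ b)/(C+1)) :=
              mul_le_mul_of_nonneg_left (min_le_right _ _) hC1.le
          _ = ε - I τ₀ b := by field_simp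
      exact lt_of_le_of_lt h1 (lt_of_lt_of_le h2 (le_min h3 h4))
    have hJle : J τ ≤ b := by
      by_contra hgt
      push_neg at hgt
      have hb2 := (hJ τ hτmem.1).2.2 b hb0 hgt
      have hcb := hclose b ⟨hb0, le_rfl⟩
      have h5 : |I τ b - I τ₀ b| < ε - I τ₀ b :=
        lt_of_lt_of_le hcb (min_le_right _ _)
      have h6 := (abs_lt.1 h5).2
      linarith
    have hJgt : T₀ - η' < J τ := by
      by_contra hle
      push_neg at hle
      have h0J := (hJ τ hτmem.1).1
      have hmle : m ≤ I τ₀ (J τ) := isMinOn_iff.1 hx₀min (J τ) ⟨h0J, hle⟩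
      have hcb := hclose (J τ) ⟨h0J, by linarith⟩
      have h5 : |I τ (J τ) - I τ₀ (J τ)| < m - ε := lt_of_lt_of_le hcb (min_le_left _ _)
      have h6 := (abs_lt.1 h5).1
      have h7 := (hJ τ hτmem.1).2.1
      linarith
    rw [Real.dist_eq]
    have h8 : |J τ - T₀| ≤ η' := abs_le.2 ⟨by linarith, by linarith⟩
    linarith
  refine ⟨hJcont, ?_⟩
  obtain ⟨τs, hτsmem, hτsmin⟩ := isCompact_Icc.exists_isMinOn (nonempty_Icc.2 hTunc.1) hJcont
  refine ⟨τs, hτsmem, fun τ hτ => isMinOn_iff.1 hτsmin τ hτ, ?_⟩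
  intro τ hτ0
  by_cases hcase : τ ≤ Tunc
  · exact isMinOn_iff.1 hτsmin τ ⟨hτ0, hcase⟩
  · have h1 : J τ = Tunc := hJT τ (le_of_not_ge hcase)
    have h2 : J Tunc = Tunc := hJT Tunc le_rfl
    have h3 := isMinOn_iff.1 hτsmin Tunc ⟨hTunc.1, le_rfl⟩
    rw [h1, ← h2]
    exact h3
end

section
/- For the vaccination-controlled SIR system ((α₁, α₂) = (1, 0)) with any measurable control u with values in [0, u_max] and initial data S(0) > 0, I(0) > 0, there exists a unique peak time t_p ≥ 0 (possibly 0) such that the derivative of I is strictly positive on [0, t_p) and strictly negative on (t_p, ∞); equivalently, βS(t) > μ for t < t_p and βS(t) < μ for t > t_p. -/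
open MeasureTheory Set

/-- Trajectory of the SIR system with linear control term, in Carathéodory (integral) form:
`S' = -βSI - α₁uS`, `I' = βSI - μI - α₂uI` on `[0, ∞)`. -/
def IsLinTraj (β μ α₁ α₂ : ℝ) (u S I : ℝ → ℝ) : Prop :=
  ContinuousOn S (Set.Ici 0) ∧ ContinuousOn I (Set.Ici 0) ∧
  (∀ t, 0 ≤ t → S t = S 0 + ∫ s in (0:ℝ)..t, (-(β * S s * I s) - α₁ * u s * S s)) ∧
  (∀ t, 0 ≤ t → I t = I 0 + ∫ s in (0:ℝ)..t, (β * S s * I s - μ * I s - α₂ * u s * I s))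

/-- Vaccination case `(α₁, α₂) = (1, 0)`: there is a unique peak time `t_p ≥ 0` such that
`I' > 0` on `[0, t_p)` and `I' < 0` on `(t_p, ∞)`; equivalently `βS(t) > μ` for `t < t_p`
and `βS(t) < μ` for `t > t_p`. -/
theorem vaccination_unique_peak_time
    (β μ umax : ℝ)
    (hβ : 0 < β) (hμ : 0 < μ) (humax : 0 < umax)
    (u S I : ℝ → ℝ)
    (hu_meas : Measurable u) (hu_range : ∀ t, u t ∈ Set.Icc 0 umax)
    (htraj : IsLinTraj β μ 1 0 u S I)
    (hS0 : 0 < S 0) (hI0 : 0 < I 0) :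
    ∃! tp : ℝ, 0 ≤ tp ∧
      (∀ t, 0 ≤ t → t < tp → 0 < derivWithin I (Set.Ici 0) t) ∧
      (∀ t, tp < t → derivWithin I (Set.Ici 0) t < 0) ∧
      (∀ t, 0 ≤ t → t < tp → μ < β * S t) ∧
      (∀ t, tp < t → β * S t < μ) := by
  obtain ⟨hScont, hIcont, hSeq, hIeq⟩ := htraj
  have hmax : Continuous (fun t : ℝ => max t 0) := continuous_id.max continuous_const
  have hmem : ∀ x : ℝ, max x 0 ∈ Set.Ici (0:ℝ) := fun x => le_max_right x 0
  set St : ℝ → ℝ := S ∘ (fun t => max t 0) with hSt_def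
  set It : ℝ → ℝ := I ∘ (fun t => max t 0) with hIt_def
  have hStc : Continuous St := hScont.comp_continuous hmax hmem
  have hItc : Continuous It := hIcont.comp_continuous hmax hmem
  have hSt_eq : ∀ t : ℝ, 0 ≤ t → St t = S t := fun t ht => by
    simp [hSt_def, Function.comp, max_eq_left ht]
  have hIt_eq : ∀ t : ℝ, 0 ≤ t → It t = I t := fun t ht => by
    simp [hIt_def, Function.comp, max_eq_left ht]
  set f : ℝ → ℝ := fun s => β * St s * It s - μ * It s with hf_def
  have hfc : Continuous f := ((continuous_const.mul hStc).mul hItc).sub (continuous_const.mul hItc)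
  set F : ℝ → ℝ := fun t => ∫ s in (0:ℝ)..t, f s with hF_def
  have hF : ∀ t : ℝ, HasDerivAt F (f t) t := fun t =>
    intervalIntegral.integral_hasDerivAt_right (hfc.intervalIntegrable 0 t)
      (hfc.stronglyMeasurableAtFilter _ _) hfc.continuousAt
  have hIF : ∀ t : ℝ, 0 ≤ t → I t = I 0 + F t := by
    intro t ht
    rw [hIeq t ht]
    congr 1
    apply intervalIntegral.integral_congr
    intro s hs
    rw [Set.uIcc_of_le ht] at hs
    simp only [hf_def]
    rw [hSt_eq s hs.1, hIt_eq s hs.1]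
    ring
  have hIderiv : ∀ t : ℝ, 0 ≤ t → HasDerivWithinAt I (f t) (Set.Ici 0) t := by
    intro t ht
    have h1 : HasDerivAt (fun t => I 0 + F t) (f t) t := (hF t).const_add (I 0)
    exact (h1.hasDerivWithinAt).congr (fun y hy => hIF y hy) (hIF t ht)
  have hIderiv' : ∀ t : ℝ, 0 ≤ t → derivWithin I (Set.Ici 0) t = f t := fun t ht =>
    (hIderiv t ht).derivWithin (uniqueDiffOn_Ici 0 t ht)
  -- positivity of I
  set a : ℝ → ℝ := fun s => β * St s - μ with ha_def
  have hac : Continuous a := (continuous_const.mul hStc).sub continuous_const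
  set A : ℝ → ℝ := fun t => ∫ s in (0:ℝ)..t, a s with hA_def
  have hA : ∀ t : ℝ, HasDerivAt A (a t) t := fun t =>
    intervalIntegral.integral_hasDerivAt_right (hac.intervalIntegrable 0 t)
      (hac.stronglyMeasurableAtFilter _ _) hac.continuousAt
  set J : ℝ → ℝ := fun t => (I 0 + F t) * Real.exp (-A t) with hJ_def
  have hFc : Continuous F := continuous_iff_continuousAt.mpr fun t => (hF t).continuousAt
  have hAc : Continuous A := continuous_iff_continuousAt.mpr fun t => (hA t).continuousAt
  have hJc : Continuous J := (continuous_const.add hFc).mul (Real.continuous_exp.comp hAc.neg)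
  have hJd : ∀ x : ℝ, 0 ≤ x → HasDerivWithinAt J 0 (Set.Ici x) x := by
    intro x hx
    have h1 : HasDerivAt J (f x * Real.exp (-A x) + (I 0 + F x) * (Real.exp (-A x) * -(a x))) x :=
      ((hF x).const_add (I 0)).mul ((hA x).neg.exp)
    have h2 : f x * Real.exp (-A x) + (I 0 + F x) * (Real.exp (-A x) * -(a x)) = 0 := by
      rw [← hIF x hx]
      simp only [hf_def, ha_def]
      rw [hSt_eq x hx, hIt_eq x hx]
      ring
    rw [h2] at h1
    exact h1.hasDerivWithinAt
  have hJ0 : J 0 = I 0 := by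
    simp [hJ_def, hF_def, hA_def, intervalIntegral.integral_same]
  have hIexp : ∀ t : ℝ, 0 ≤ t → I t * Real.exp (-A t) = I 0 := by
    intro t ht
    have h1 : J t = J 0 :=
      constant_of_has_deriv_right_zero (f := J) (a := 0) (b := t)
        hJc.continuousOn (fun x hx => hJd x hx.1) t ⟨ht, le_rfl⟩
    rw [hJ0] at h1
    rw [hIF t ht]
    exact h1
  have hIpos : ∀ t : ℝ, 0 ≤ t → 0 < I t := by
    intro t ht
    have h2 := hIexp t ht
    nlinarith [Real.exp_pos (-A t)]
  -- integrability of the S integrand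
  set g : ℝ → ℝ := fun s => -(β * St s * It s) - u s * St s with hg_def
  have hgint : ∀ p q : ℝ, IntervalIntegrable g volume p q := by
    intro p q
    have h1 : IntervalIntegrable (fun s => -(β * St s * It s)) volume p q :=
      (((continuous_const.mul hStc).mul hItc).neg).intervalIntegrable p q
    have h2 : IntervalIntegrable (fun s => u s * St s) volume p q := by
      rw [intervalIntegrable_iff]
      refine Integrable.bdd_mul (intervalIntegrable_iff.mp (hStc.intervalIntegrable p q))
        (c := umax) (hu_meas.aestronglyMeasurable.restrict) (Filter.Eventually.of_forall (fun x => ?_))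
      rw [Real.norm_eq_abs, abs_le]
      exact ⟨by linarith [(hu_range x).1], (hu_range x).2⟩
    exact h1.sub h2
  have hSdiff : ∀ t1 t2 : ℝ, 0 ≤ t1 → t1 ≤ t2 → S t2 = S t1 + ∫ s in t1..t2, g s := by
    intro t1 t2 h1 h12
    have e1 : ∀ t : ℝ, 0 ≤ t → S t = S 0 + ∫ s in (0:ℝ)..t, g s := by
      intro t ht
      rw [hSeq t ht]
      congr 1
      apply intervalIntegral.integral_congr
      intro s hs
      rw [Set.uIcc_of_le ht] at hs
      simp only [hg_def]
      rw [hSt_eq s hs.1, hIt_eq s hs.1]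
      ring
    have e2 := e1 t1 h1
    have e3 := e1 t2 (le_trans h1 h12)
    have e4 : (∫ s in (0:ℝ)..t1, g s) + ∫ s in t1..t2, g s = ∫ s in (0:ℝ)..t2, g s :=
      intervalIntegral.integral_add_adjacent_intervals (hgint 0 t1) (hgint t1 t2)
    rw [e3, ← e4, e2]; ring
  -- quantitative strict decrease of S
  have hC1 : ∀ t1 t2 c δ : ℝ, 0 ≤ t1 → t1 ≤ t2 → 0 < c → 0 < δ →
      (∀ s ∈ Set.Icc t1 t2, c ≤ S s) → (∀ s ∈ Set.Icc t1 t2, δ ≤ I s) →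
      S t2 ≤ S t1 - β * c * δ * (t2 - t1) := by
    intro t1 t2 c δ h1 h12 hc hδ hSc hIδ
    have hb : ∀ s ∈ Set.Icc t1 t2, g s ≤ -(β * c * δ) := by
      intro s hs
      have hs0 : 0 ≤ s := le_trans h1 hs.1
      have hSs := hSc s hs
      have hIs := hIδ s hs
      have hu0 := (hu_range s).1
      simp only [hg_def]
      rw [hSt_eq s hs0, hIt_eq s hs0]
      have h3 : β * c * δ ≤ β * S s * I s := by
        have hcd : c * δ ≤ S s * I s := mul_le_mul hSs hIs hδ.le (le_trans hc.le hSs)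
        have := mul_le_mul_of_nonneg_left hcd hβ.le
        nlinarith
      nlinarith [mul_nonneg hu0 (le_trans hc.le hSs)]
    have hmono := intervalIntegral.integral_mono_on h12 (hgint t1 t2)
      (intervalIntegrable_const (c := -(β * c * δ))) hb
    rw [intervalIntegral.integral_const, smul_eq_mul] at hmono
    have hd := hSdiff t1 t2 h1 h12
    rw [hd]
    linarith
  -- no-return lemma
  have hC2 : ∀ t0 t L : ℝ, 0 ≤ t0 → t0 < t → 0 < L → S t0 < L → S t < L := by
    intro t0 t L ht0 htt hL hSL
    by_contra hcon
    push_neg at hcon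
    set c : ℝ := (max (S t0) 0 + L) / 2 with hc_def
    have hm0 : (0:ℝ) ≤ max (S t0) 0 := le_max_right _ _
    have hmL : max (S t0) 0 < L := max_lt hSL hL
    have hcpos : 0 < c := by rw [hc_def]; linarith
    have hcL : c < L := by rw [hc_def]; linarith
    have hct0 : S t0 < c := by
      have := le_max_left (S t0) 0
      rw [hc_def]; linarith
    set B : Set ℝ := Set.Icc t0 t ∩ St ⁻¹' Set.Iic c with hB_def
    have hBclosed : IsClosed B := isClosed_Icc.inter (isClosed_Iic.preimage hStc)
    have hBne : B.Nonempty := ⟨t0, ⟨le_rfl, htt.le⟩, by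
      simp only [Set.mem_preimage, Set.mem_Iic]; rw [hSt_eq t0 ht0]; exact hct0.le⟩
    have hBbdd : BddAbove B := ⟨t, fun x hx => hx.1.2⟩
    set t2 := sSup B with ht2_def
    have ht2B : t2 ∈ B := hBclosed.csSup_mem hBne hBbdd
    have ht2mem : t2 ∈ Set.Icc t0 t := ht2B.1
    have ht20 : 0 ≤ t2 := le_trans ht0 ht2mem.1
    have ht2le : St t2 ≤ c := ht2B.2
    have htnotB : t ∉ B := by
      intro ht
      have : St t ≤ c := ht.2
      rw [hSt_eq t (le_trans ht0 htt.le)] at this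
      linarith
    have ht2t : t2 < t := lt_of_le_of_ne ht2mem.2 (fun h => htnotB (h ▸ ht2B))
    have h_after : ∀ s, t2 < s → s ≤ t → c < S s := by
      intro s hs1 hs2
      have hsmem : s ∈ Set.Icc t0 t := ⟨le_trans ht2mem.1 hs1.le, hs2⟩
      have hsnotB : s ∉ B := fun hsB => absurd (le_csSup hBbdd hsB) (not_le.mpr hs1)
      have : ¬ St s ≤ c := fun hh => hsnotB ⟨hsmem, hh⟩
      rw [hSt_eq s (le_trans ht0 hsmem.1)] at this
      linarith
    have ht2ge : c ≤ St t2 := by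
      have htend : Filter.Tendsto St (nhdsWithin t2 (Set.Ioi t2)) (nhds (St t2)) :=
        (hStc.continuousAt).continuousWithinAt
      refine ge_of_tendsto htend ?_
      filter_upwards [Ioo_mem_nhdsGT_of_mem (Set.left_mem_Ico.mpr ht2t)] with s hs
      rw [hSt_eq s (le_trans ht20 hs.1.le)]
      exact (h_after s hs.1 hs.2.le).le
    have ht2c : S t2 = c := by
      rw [← hSt_eq t2 ht20]; exact le_antisymm ht2le ht2ge
    obtain ⟨sm, hsm, hminI⟩ := isCompact_Icc.exists_isMinOn (Set.nonempty_Icc.mpr ht2t.le)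
      (hIcont.mono (fun x hx => le_trans ht20 hx.1))
    have hδ : 0 < I sm := hIpos sm (le_trans ht20 hsm.1)
    have hge : ∀ s ∈ Set.Icc t2 t, c ≤ S s := by
      intro s hs
      rcases eq_or_lt_of_le hs.1 with he | hlt
      · rw [← he, ht2c]
      · exact (h_after s hlt hs.2).le
    have hIle : ∀ s ∈ Set.Icc t2 t, I sm ≤ I s := fun s hs => hminI hs
    have hfin := hC1 t2 t c (I sm) ht20 ht2t.le hcpos hδ hge hIle
    have hprod : 0 < β * c * I sm * (t - t2) :=
      mul_pos (mul_pos (mul_pos hβ hcpos) hδ) (by linarith)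
    rw [ht2c] at hfin
    linarith
  -- eventual crossing
  have hD : ∃ T, 0 ≤ T ∧ β * S T < μ := by
    by_contra hcon
    push_neg at hcon
    have ha0 : ∀ s : ℝ, 0 ≤ a s := by
      intro s
      have h := hcon (max s 0) (le_max_right s 0)
      simp only [ha_def, hSt_def, Function.comp]
      linarith
    have hIge : ∀ s : ℝ, 0 ≤ s → I 0 ≤ I s := by
      intro s hs
      have hAnn : 0 ≤ A s := intervalIntegral.integral_nonneg hs (fun x _ => ha0 x)
      have he : Real.exp (-A s) ≤ 1 := Real.exp_le_one_iff.mpr (by linarith)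
      have h2 := hIexp s hs
      nlinarith [hIpos s hs, Real.exp_pos (-A s)]
    have hSlb : ∀ s : ℝ, 0 ≤ s → μ / β ≤ S s := by
      intro s hs
      have := hcon s hs
      rw [div_le_iff₀ hβ]
      linarith
    set T : ℝ := S 0 / (μ * I 0) with hT_def
    have hμI : 0 < μ * I 0 := mul_pos hμ hI0
    have hTnn : 0 ≤ T := le_of_lt (div_pos hS0 hμI)
    have hT := hC1 0 T (μ / β) (I 0) le_rfl hTnn (div_pos hμ hβ) hI0
      (fun s hs => hSlb s hs.1) (fun s hs => hIge s hs.1)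
    have hTe : μ * I 0 * T = S 0 := by
      rw [hT_def]; field_simp
    have hβμ : β * (μ / β) = μ := by field_simp
    rw [hβμ] at hT
    have := hSlb T hTnn
    have hpos : 0 < μ / β := div_pos hμ hβ
    nlinarith
  -- the peak time
  set Aset : Set ℝ := Set.Ici 0 ∩ (fun t => β * St t) ⁻¹' Set.Iic μ with hAset_def
  have hAclosed : IsClosed Aset := isClosed_Ici.inter (isClosed_Iic.preimage (continuous_const.mul hStc))
  obtain ⟨T, hT0, hTlt⟩ := hD
  have hTA : T ∈ Aset := ⟨hT0, by
    simp only [Set.mem_preimage, Set.mem_Iic]; rw [hSt_eq T hT0]; exact hTlt.le⟩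
  have hAne : Aset.Nonempty := ⟨T, hTA⟩
  have hAbdd : BddBelow Aset := ⟨0, fun x hx => hx.1⟩
  set tp := sInf Aset with htp_def
  have htpA : tp ∈ Aset := hAclosed.csInf_mem hAne hAbdd
  have htp0 : 0 ≤ tp := htpA.1
  have htpS : β * S tp ≤ μ := by
    have := htpA.2
    simp only [Set.mem_preimage, Set.mem_Iic] at this
    rwa [hSt_eq tp htp0] at this
  have hbefore : ∀ t, 0 ≤ t → t < tp → μ < β * S t := by
    intro t ht htlt
    by_contra h
    push_neg at h
    have htA : t ∈ Aset := ⟨ht, by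
      simp only [Set.mem_preimage, Set.mem_Iic]; rw [hSt_eq t ht]; exact h⟩
    exact absurd (csInf_le hAbdd htA) (not_le.mpr htlt)
  have hafter : ∀ t, tp < t → β * S t < μ := by
    intro t htpt
    have ht0 : 0 ≤ t := le_trans htp0 htpt.le
    by_contra h
    push_neg at h
    by_cases hcase : ∃ s, tp ≤ s ∧ s < t ∧ S s < μ / β
    · obtain ⟨s, hs1, hs2, hs3⟩ := hcase
      have hlt := hC2 s t (μ / β) (le_trans htp0 hs1) hs2 (div_pos hμ hβ) hs3
      rw [lt_div_iff₀ hβ] at hlt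
      linarith
    · push_neg at hcase
      have hge : ∀ s ∈ Set.Icc tp t, μ / β ≤ S s := by
        intro s hs
        rcases eq_or_lt_of_le hs.2 with he | hlt
        · rw [he, div_le_iff₀ hβ]; linarith
        · exact hcase s hs.1 hlt
      obtain ⟨sm, hsm, hminI⟩ := isCompact_Icc.exists_isMinOn (Set.nonempty_Icc.mpr htpt.le)
        (hIcont.mono (fun x hx => le_trans htp0 hx.1))
      have hδ : 0 < I sm := hIpos sm (le_trans htp0 hsm.1)
      have hfin := hC1 tp t (μ / β) (I sm) htp0 htpt.le (div_pos hμ hβ) hδ hge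
        (fun s hs => hminI hs)
      have hprod : 0 < β * (μ / β) * I sm * (t - tp) :=
        mul_pos (mul_pos (mul_pos hβ (div_pos hμ hβ)) hδ) (by linarith)
      have h1 : S tp ≤ μ / β := by rw [le_div_iff₀ hβ]; linarith
      have h2 : μ / β ≤ S t := by rw [div_le_iff₀ hβ]; linarith
      linarith
  refine ⟨tp, ⟨htp0, ?_, ?_, hbefore, hafter⟩, ?_⟩
  · intro t ht htlt
    rw [hIderiv' t ht]
    have h1 := hbefore t ht htlt
    have h2 := hIpos t ht
    simp only [hf_def]
    rw [hSt_eq t ht, hIt_eq t ht]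
    nlinarith
  · intro t htlt
    have ht : 0 ≤ t := le_trans htp0 htlt.le
    rw [hIderiv' t ht]
    have h1 := hafter t htlt
    have h2 := hIpos t ht
    simp only [hf_def]
    rw [hSt_eq t ht, hIt_eq t ht]
    nlinarith
  · rintro tq ⟨hq0, _, _, hq3, hq4⟩
    by_contra hne'
    rcases lt_or_gt_of_ne hne' with hlt | hgt
    · have h1 : tq < (tq + tp) / 2 := by linarith
      have h2 : (tq + tp) / 2 < tp := by linarith
      have h3 : (0:ℝ) ≤ (tq + tp) / 2 := by linarith
      exact absurd (hbefore _ h3 h2) (not_lt.mpr (hq4 _ h1).le)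
    · have h1 : tp < (tp + tq) / 2 := by linarith
      have h2 : (tp + tq) / 2 < tq := by linarith
      have h3 : (0:ℝ) ≤ (tp + tq) / 2 := by linarith
      exact absurd (hq3 _ h3 h2) (not_lt.mpr (hafter _ h1).le)
end

section
/- Let (S, I) be a trajectory of the controlled SIR system with linear control term on an interval with S(t) > 0 and I(t) > 0 throughout, and let (λ_S, λ_I) solve the adjoint system along this trajectory with (λ_S(t), λ_I(t)) ≠ (0, 0) for every t. Then every zero of the switching function ψ is isolated: at any time t₀ with ψ(t₀) = 0, the derivative ψ'(t₀) is nonzero. In particular, ψ cannot vanish identically on a nonempty open interval. -/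
open Set

/-- PMP for the linear-control SIR system: along a trajectory with `S, I > 0` and a nonzero
solution of the adjoint system, every zero of the switching function
`ψ = -α₁ S λS - α₂ I λI` is isolated (`ψ' ≠ 0` there); in particular `ψ` cannot vanish
identically on a nonempty open subinterval. -/
theorem linear_switching_function_zeros_isolated
    (β μ α₁ α₂ a b : ℝ)
    (hβ : 0 < β) (hμ : 0 < μ)
    (hα₁ : 0 ≤ α₁) (hα₂ : 0 ≤ α₂) (hα : ¬(α₁ = 0 ∧ α₂ = 0))
    (hab : a < b)
    (u S I lS lI : ℝ → ℝ)
    (hpos : ∀ t ∈ Set.Icc a b, 0 < S t ∧ 0 < I t)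
    (hS : ∀ t ∈ Set.Icc a b,
      HasDerivAt S (-(β * S t * I t) - α₁ * u t * S t) t)
    (hI : ∀ t ∈ Set.Icc a b,
      HasDerivAt I (β * S t * I t - μ * I t - α₂ * u t * I t) t)
    (hlS : ∀ t ∈ Set.Icc a b,
      HasDerivAt lS ((lS t - lI t) * β * I t + α₁ * u t * lS t) t)
    (hlI : ∀ t ∈ Set.Icc a b,
      HasDerivAt lI ((lS t - lI t) * β * S t + μ * lI t + α₂ * u t * lI t) t)
    (hlnz : ∀ t ∈ Set.Icc a b, ¬(lS t = 0 ∧ lI t = 0)) :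
    (∀ t₀ ∈ Set.Icc a b, -(α₁ * S t₀ * lS t₀) - α₂ * I t₀ * lI t₀ = 0 →
      deriv (fun t => -(α₁ * S t * lS t) - α₂ * I t * lI t) t₀ ≠ 0) ∧
    ∀ c d : ℝ, a ≤ c → c < d → d ≤ b →
      ¬(∀ t ∈ Set.Ioo c d, -(α₁ * S t * lS t) - α₂ * I t * lI t = 0) := by
  have hψ : ∀ t ∈ Set.Icc a b,
      HasDerivAt (fun t => -(α₁ * S t * lS t) - α₂ * I t * lI t)
        (β * S t * I t * (α₁ * lI t - α₂ * lS t)) t := by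
    intro t ht
    have h1 := (((hS t ht).const_mul α₁).mul (hlS t ht)).neg
    have h2 := ((hI t ht).const_mul α₂).mul (hlI t ht)
    have := h1.sub h2
    refine this.congr_deriv ?_
    ring
  have key : ∀ t₀ ∈ Set.Icc a b, -(α₁ * S t₀ * lS t₀) - α₂ * I t₀ * lI t₀ = 0 →
      deriv (fun t => -(α₁ * S t * lS t) - α₂ * I t * lI t) t₀ ≠ 0 := by
    intro t₀ ht₀ hzero
    rw [(hψ t₀ ht₀).deriv]
    intro hd
    obtain ⟨hSpos, hIpos⟩ := hpos t₀ ht₀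
    have hSI : 0 < β * S t₀ * I t₀ := by positivity
    have hswitch : α₁ * lI t₀ - α₂ * lS t₀ = 0 := by
      rcases mul_eq_zero.1 hd with h | h
      · exact absurd h hSI.ne'
      · exact h
    have hsum : 0 < α₁ ^ 2 * S t₀ + α₂ ^ 2 * I t₀ := by
      rcases eq_or_ne α₁ 0 with h1 | h1
      · have h2 : α₂ ≠ 0 := fun h2 => hα ⟨h1, h2⟩
        have : 0 < α₂ ^ 2 * I t₀ := by positivity
        nlinarith [sq_nonneg α₁, hSpos]
      · have : 0 < α₁ ^ 2 * S t₀ := by positivity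
        nlinarith [sq_nonneg α₂, hIpos]
    have hlS0 : lS t₀ = 0 := by
      have h1 : lS t₀ * (α₁ ^ 2 * S t₀ + α₂ ^ 2 * I t₀) = 0 := by
        linear_combination (-α₁) * hzero + (-(α₂ * I t₀)) * hswitch
      rcases mul_eq_zero.1 h1 with h | h
      · exact h
      · exact absurd h hsum.ne'
    have hlI0 : lI t₀ = 0 := by
      have h1 : lI t₀ * (α₁ ^ 2 * S t₀ + α₂ ^ 2 * I t₀) = 0 := by
        linear_combination (α₁ * S t₀) * hswitch + (-α₂) * hzero
      rcases mul_eq_zero.1 h1 with h | h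
      · exact h
      · exact absurd h hsum.ne'
    exact hlnz t₀ ht₀ ⟨hlS0, hlI0⟩
  refine ⟨key, ?_⟩
  intro c d hac hcd hdb hall
  set t₀ := (c + d) / 2 with ht₀def
  have ht₀ : t₀ ∈ Set.Ioo c d := ⟨by linarith, by linarith⟩
  have ht₀' : t₀ ∈ Set.Icc a b := ⟨by linarith [ht₀.1], by linarith [ht₀.2]⟩
  have hzero := hall t₀ ht₀
  have hev : (fun t => -(α₁ * S t * lS t) - α₂ * I t * lI t) =ᶠ[nhds t₀]
      (fun _ => (0 : ℝ)) := by
    filter_upwards [isOpen_Ioo.mem_nhds ht₀] with t ht using hall t ht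
  have : deriv (fun t => -(α₁ * S t * lS t) - α₂ * I t * lI t) t₀ = 0 := by
    rw [hev.deriv_eq, deriv_const]
  exact key t₀ ht₀' hzero this
end

section
/- Let (S, I) be a trajectory of the controlled SIR system with linear control term on [0, T] with S, I > 0 throughout, and let (λ_S, λ_I) solve the adjoint system along this trajectory. Assume the transversality condition λ_S(T) = 0, that the Hamiltonian vanishes at T, and that I'(T) < 0. Then λ_I(T) = −1/I'(T) > 0, and the switching function ψ is strictly negative on some left-neighborhood (T − δ, T) of T. -/
open Set Filter

lemma eventually_left_to_delta {T : ℝ} {P : ℝ → Prop}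
    (h : ∀ᶠ t in nhdsWithin T (Set.Iio T), P t) :
    ∃ δ > 0, ∀ t ∈ Set.Ioo (T - δ) T, P t := by
  rw [Filter.eventually_iff, mem_nhdsLT_iff_exists_Ioo_subset] at h
  obtain ⟨l, hl, hsub⟩ := h
  refine ⟨T - l, sub_pos.mpr hl, fun t ht => hsub ?_⟩
  have : T - (T - l) = l := by ring
  rw [this] at ht
  exact ht

lemma left_neg_of_deriv_pos {f : ℝ → ℝ} {c T : ℝ} (hf : HasDerivAt f c T)
    (hc : 0 < c) (h0 : f T = 0) :
    ∃ δ > 0, ∀ t ∈ Set.Ioo (T - δ) T, f t < 0 := by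
  have hs := hasDerivAt_iff_tendsto_slope.mp hf
  have h1 : ∀ᶠ t in nhdsWithin T {T}ᶜ, 0 < slope f T t :=
    hs.eventually (eventually_gt_nhds hc)
  have h2 : nhdsWithin T (Set.Iio T) ≤ nhdsWithin T {T}ᶜ :=
    nhdsWithin_mono T (fun x hx => ne_of_lt hx)
  have h3 : ∀ᶠ t in nhdsWithin T (Set.Iio T), 0 < slope f T t := h1.filter_mono h2
  have h4 : ∀ᶠ t in nhdsWithin T (Set.Iio T), t < T :=
    eventually_mem_nhdsWithin.mono (fun t ht => ht)
  apply eventually_left_to_delta ((h3.and h4).mono ?_)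
  rintro t ⟨hpos, hlt⟩
  have hsl : slope f T t = f t / (t - T) := by
    rw [slope_def_field, h0, sub_zero]

  rw [hsl] at hpos
  rcases div_pos_iff.mp hpos with ⟨hf1, ht1⟩ | ⟨hf1, ht1⟩
  · linarith
  · exact hf1

/-- PMP for the linear-control SIR system: if the transversality condition `λS(T) = 0`
holds, the Hamiltonian vanishes at `T`, and `I'(T) < 0`, then `λI(T) = -1/I'(T) > 0`
and the switching function `ψ = -α₁ S λS - α₂ I λI` is strictly negative on a
left-neighborhood of `T`. -/
theorem linear_switching_function_negative_near_final_time
    (β μ α₁ α₂ T : ℝ)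
    (hβ : 0 < β) (hμ : 0 < μ)
    (hα₁ : 0 ≤ α₁) (hα₂ : 0 ≤ α₂) (hα : ¬(α₁ = 0 ∧ α₂ = 0))
    (hT : 0 < T)
    (u S I lS lI : ℝ → ℝ)
    (hpos : ∀ t ∈ Set.Icc 0 T, 0 < S t ∧ 0 < I t)
    (hS : ∀ t ∈ Set.Icc 0 T,
      HasDerivAt S (-(β * S t * I t) - α₁ * u t * S t) t)
    (hI : ∀ t ∈ Set.Icc 0 T,
      HasDerivAt I (β * S t * I t - μ * I t - α₂ * u t * I t) t)
    (hlS : ∀ t ∈ Set.Icc 0 T,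
      HasDerivAt lS ((lS t - lI t) * β * I t + α₁ * u t * lS t) t)
    (hlI : ∀ t ∈ Set.Icc 0 T,
      HasDerivAt lI ((lS t - lI t) * β * S t + μ * lI t + α₂ * u t * lI t) t)
    (htrans : lS T = 0)
    (hH : 1 - (β * S T * I T + α₁ * u T * S T) * lS T
        + (β * S T * I T - μ * I T - α₂ * u T * I T) * lI T = 0)
    (hI'T : deriv I T < 0) :
    lI T = -1 / deriv I T ∧ 0 < lI T ∧
    ∃ δ > 0, ∀ t ∈ Set.Ioo (T - δ) T,
      -(α₁ * S t * lS t) - α₂ * I t * lI t < 0 := by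
  have hTmem : T ∈ Set.Icc 0 T := ⟨le_of_lt hT, le_refl T⟩
  have dS := hS T hTmem
  have dI := hI T hTmem
  have dlS := hlS T hTmem
  have dlI := hlI T hTmem
  have hderiv : deriv I T = β * S T * I T - μ * I T - α₂ * u T * I T := dI.deriv
  have hDne : deriv I T ≠ 0 := ne_of_lt hI'T
  have hHD : 1 + deriv I T * lI T = 0 := by
    rw [hderiv]; rw [htrans] at hH; linarith
  have hlIT : lI T = -1 / deriv I T := by
    field_simp
    linarith
  have hlITpos : 0 < lI T := by
    rw [hlIT]
    exact div_pos_iff.mpr (Or.inr ⟨by norm_num, hI'T⟩)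
  refine ⟨hlIT, hlITpos, ?_⟩
  have hST := (hpos T hTmem).1
  have hIT := (hpos T hTmem).2
  by_cases h2 : α₂ = 0
  · -- α₂ = 0 : derivative argument
    have hα₁pos : 0 < α₁ := by
      rcases lt_or_eq_of_le hα₁ with h | h
      · exact h
      · exact absurd ⟨h.symm, h2⟩ hα
    have dψ : HasDerivAt (fun t => -(α₁ * S t * lS t) - α₂ * I t * lI t)
        (-((α₁ * (-(β * S T * I T) - α₁ * u T * S T)) * lS T
            + (α₁ * S T) * ((lS T - lI T) * β * I T + α₁ * u T * lS T))
          - ((α₂ * (β * S T * I T - μ * I T - α₂ * u T * I T)) * lI T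
            + (α₂ * I T) * ((lS T - lI T) * β * S T + μ * lI T + α₂ * u T * lI T))) T := by
      exact (((dS.const_mul α₁).mul dlS).neg).sub ((dI.const_mul α₂).mul dlI)
    have hψT0 : (fun t => -(α₁ * S t * lS t) - α₂ * I t * lI t) T = 0 := by
      simp [htrans, h2]
    have hcpos : 0 < -((α₁ * (-(β * S T * I T) - α₁ * u T * S T)) * lS T
            + (α₁ * S T) * ((lS T - lI T) * β * I T + α₁ * u T * lS T))
          - ((α₂ * (β * S T * I T - μ * I T - α₂ * u T * I T)) * lI T
            + (α₂ * I T) * ((lS T - lI T) * β * S T + μ * lI T + α₂ * u T * lI T)) := by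
      rw [htrans, h2]
      ring_nf
      nlinarith [mul_pos hST hIT, mul_pos hα₁pos hβ, mul_pos (mul_pos hST hIT) hlITpos]
    exact left_neg_of_deriv_pos dψ hcpos hψT0
  · -- α₂ > 0 : continuity argument
    have hα₂pos : 0 < α₂ := lt_of_le_of_ne hα₂ (Ne.symm h2)
    have hc : ContinuousAt (fun t => -(α₁ * S t * lS t) - α₂ * I t * lI t) T := by
      exact (((continuousAt_const.mul dS.continuousAt).mul dlS.continuousAt).neg).sub
        ((continuousAt_const.mul dI.continuousAt).mul dlI.continuousAt)
    have hψTneg : (fun t => -(α₁ * S t * lS t) - α₂ * I t * lI t) T < 0 := by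
      simp only [htrans, mul_zero, neg_zero, zero_sub, neg_lt_zero]
      positivity
    have hev : ∀ᶠ t in nhds T, -(α₁ * S t * lS t) - α₂ * I t * lI t < 0 :=
      hc.eventually_lt_const hψTneg
    exact eventually_left_to_delta (hev.filter_mono nhdsWithin_le_nhds)
end

section
/- Isolation case ((α₁, α₂) = (0, 1)): let (S, I) be a trajectory of the isolation-controlled SIR system on [0, T] with S, I > 0 throughout, let (λ_S, λ_I) solve the adjoint system along this trajectory, and assume the Hamiltonian H(t) is identically zero on [0, T]. Then at every time t₀ ∈ (0, T) where the switching function ψ(t) = −I(t)λ_I(t) vanishes, its derivative equals −1: ψ'(t₀) = −1. Consequently ψ has at most one zero in (0, T), and at such a zero ψ changes sign from positive to negative. -/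
open Set

private lemma before_zero' {f : ℝ → ℝ} {c d : ℝ} (hdc : d < c) (hfc : f c = 0)
    (hder : HasDerivAt f (-1) c) : ∃ s ∈ Ioo d c, 0 < f s := by
  have h := hasDerivAt_iff_tendsto_slope.mp hder
  have h2 : Filter.Tendsto (slope f c) (nhdsWithin c (Iio c)) (nhds (-1)) :=
    h.mono_left (nhdsWithin_mono c (fun x hx => ne_of_lt hx))
  have h3 : ∀ᶠ s in nhdsWithin c (Iio c), slope f c s < 0 :=
    h2.eventually_lt_const (by norm_num)
  have h4 : Ioo d c ∈ nhdsWithin c (Iio c) := Ioo_mem_nhdsLT_of_mem ⟨hdc, le_refl c⟩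
  obtain ⟨s, hs1, hs2⟩ := (h3.and (Filter.eventually_of_mem h4 fun x hx => hx)).exists
  refine ⟨s, hs2, ?_⟩
  have hsl : slope f c s = f s / (s - c) := by simp [slope, hfc, div_eq_inv_mul]
  rw [hsl] at hs1
  rcases div_neg_iff.mp hs1 with ⟨h5, _⟩ | ⟨_, h6⟩
  · exact h5
  · linarith [hs2.2]

private lemma after_zero' {f : ℝ → ℝ} {c d : ℝ} (hcd : c < d) (hfc : f c = 0)
    (hder : HasDerivAt f (-1) c) : ∃ s ∈ Ioo c d, f s < 0 := by
  have h := hasDerivAt_iff_tendsto_slope.mp hder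
  have h2 : Filter.Tendsto (slope f c) (nhdsWithin c (Ioi c)) (nhds (-1)) :=
    h.mono_left (nhdsWithin_mono c (fun x hx => ne_of_gt hx))
  have h3 : ∀ᶠ s in nhdsWithin c (Ioi c), slope f c s < 0 :=
    h2.eventually_lt_const (by norm_num)
  have h4 : Ioo c d ∈ nhdsWithin c (Ioi c) := Ioo_mem_nhdsGT_of_mem ⟨le_refl c, hcd⟩
  obtain ⟨s, hs1, hs2⟩ := (h3.and (Filter.eventually_of_mem h4 fun x hx => hx)).exists
  refine ⟨s, hs2, ?_⟩
  have hsl : slope f c s = f s / (s - c) := by simp [slope, hfc, div_eq_inv_mul]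
  rw [hsl] at hs1
  rcases div_neg_iff.mp hs1 with ⟨_, h5⟩ | ⟨h6, _⟩
  · linarith [hs2.1]
  · exact h6

private lemma no_neg_before' {f : ℝ → ℝ} {a b : ℝ} (hab : a < b)
    (hcont : ContinuousOn f (Icc a b))
    (hfa : f a < 0) (hfb : f b = 0)
    (hder : ∀ c ∈ Ioc a b, f c = 0 → HasDerivAt f (-1) c) : False := by
  set Z : Set ℝ := {s | s ∈ Icc a b ∧ f s = 0} with hZ
  have hZb : b ∈ Z := ⟨⟨hab.le, le_refl b⟩, hfb⟩
  have hZbdd : BddBelow Z := ⟨a, fun x hx => hx.1.1⟩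
  have hZclosed : IsClosed Z := by
    have hZeq : Z = Icc a b ∩ f ⁻¹' {0} := by ext x; simp [hZ]
    rw [hZeq]
    exact hcont.preimage_isClosed_of_isClosed isClosed_Icc isClosed_singleton
  set c := sInf Z with hc
  have hcZ : c ∈ Z := hZclosed.csInf_mem ⟨b, hZb⟩ hZbdd
  have hac : a < c := hcZ.1.1.lt_of_ne fun h => absurd (h ▸ hcZ.2) hfa.ne
  have hneg : ∀ s ∈ Ico a c, f s < 0 := by
    intro s hs
    by_contra hns
    push_neg at hns
    have hsub : Icc a s ⊆ Icc a b := Icc_subset_Icc le_rfl (hs.2.le.trans hcZ.1.2)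
    obtain ⟨x, hx, hfx⟩ := (intermediate_value_Icc hs.1 (hcont.mono hsub)) ⟨hfa.le, hns⟩
    exact absurd (csInf_le hZbdd ⟨hsub hx, hfx⟩) (not_le.mpr (lt_of_le_of_lt hx.2 hs.2))
  obtain ⟨s, hs, hfs⟩ := before_zero' hac hcZ.2 (hder c ⟨hac, hcZ.1.2⟩ hcZ.2)
  exact absurd hfs (not_lt.mpr (hneg s ⟨hs.1.le, hs.2⟩).le)

private lemma no_pos_after' {f : ℝ → ℝ} {a b : ℝ} (hab : a < b)
    (hcont : ContinuousOn f (Icc a b))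
    (hfa : f a = 0) (hfb : 0 < f b)
    (hder : ∀ c ∈ Ico a b, f c = 0 → HasDerivAt f (-1) c) : False := by
  have hmaps : ∀ s ∈ Icc a b, a + b - s ∈ Icc a b := by
    intro s hs; exact ⟨by linarith [hs.2], by linarith [hs.1]⟩
  apply no_neg_before' (f := fun s => -f (a + b - s)) hab
  · exact ((hcont.comp ((continuous_const.sub continuous_id).continuousOn) hmaps).neg)
  · show -f (a + b - a) < 0
    have : a + b - a = b := by ring
    rw [this]; linarith
  · show -f (a + b - b) = 0
    have : a + b - b = a := by ring
    rw [this, hfa, neg_zero]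
  · intro x hx hgx
    have hfx : f (a + b - x) = 0 := by
      have := neg_eq_zero.mp hgx
      exact this
    have hmem : a + b - x ∈ Ico a b := ⟨by linarith [hx.2], by linarith [hx.1]⟩
    have h1 : HasDerivAt (fun s : ℝ => a + b - s) (-1) x := by
      simpa using (hasDerivAt_id x).const_sub (a + b)
    have h2 := ((hder _ hmem hfx).comp x h1).neg
    exact h2.congr_deriv (by norm_num)

/-- PMP for the isolation-controlled SIR system (`(α₁, α₂) = (0, 1)`): if the Hamiltonian
vanishes identically on `[0, T]`, then at every zero `t₀ ∈ (0, T)` of the switching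
function `ψ(t) = -I(t)λI(t)` one has `ψ'(t₀) = -1`; consequently `ψ` has at most one zero
in `(0, T)`, and at such a zero `ψ` changes sign from positive to negative. -/
theorem isolation_switching_function_unique_zero
    (β μ T : ℝ)
    (hβ : 0 < β) (hμ : 0 < μ) (hT : 0 < T)
    (u S I lS lI : ℝ → ℝ)
    (hpos : ∀ t ∈ Set.Icc 0 T, 0 < S t ∧ 0 < I t)
    (hS : ∀ t ∈ Set.Icc 0 T,
      HasDerivAt S (-(β * S t * I t)) t)
    (hI : ∀ t ∈ Set.Icc 0 T,
      HasDerivAt I (β * S t * I t - μ * I t - u t * I t) t)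
    (hlS : ∀ t ∈ Set.Icc 0 T,
      HasDerivAt lS ((lS t - lI t) * β * I t) t)
    (hlI : ∀ t ∈ Set.Icc 0 T,
      HasDerivAt lI ((lS t - lI t) * β * S t + μ * lI t + u t * lI t) t)
    (hH : ∀ t ∈ Set.Icc 0 T,
      1 - (β * S t * I t) * lS t + (β * S t * I t - μ * I t - u t * I t) * lI t = 0) :
    (∀ t₀ ∈ Set.Ioo 0 T, -(I t₀ * lI t₀) = 0 →
      deriv (fun t => -(I t * lI t)) t₀ = -1) ∧
    (∀ t₀ ∈ Set.Ioo 0 T, ∀ t₁ ∈ Set.Ioo 0 T,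
      -(I t₀ * lI t₀) = 0 → -(I t₁ * lI t₁) = 0 → t₀ = t₁) ∧
    (∀ t₀ ∈ Set.Ioo 0 T, -(I t₀ * lI t₀) = 0 →
      (∀ t ∈ Set.Ioo 0 t₀, 0 < -(I t * lI t)) ∧
      (∀ t ∈ Set.Ioo t₀ T, -(I t * lI t) < 0)) := by
  set ψ : ℝ → ℝ := fun t => -(I t * lI t) with hψ
  have hψder : ∀ t ∈ Icc 0 T, HasDerivAt ψ (-(β * S t * I t * lS t)) t := by
    intro t ht
    have h := ((hI t ht).mul (hlI t ht)).neg
    exact h.congr_deriv (by ring)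
  have hkey : ∀ t₀ ∈ Ioo 0 T, ψ t₀ = 0 → HasDerivAt ψ (-1) t₀ := by
    intro t₀ ht₀ h0
    have htI : t₀ ∈ Icc 0 T := ⟨ht₀.1.le, ht₀.2.le⟩
    have hIpos : 0 < I t₀ := (hpos t₀ htI).2
    have hlI0 : lI t₀ = 0 := by
      have hmul : I t₀ * lI t₀ = 0 := by
        have := neg_eq_zero.mp h0
        exact this
      rcases mul_eq_zero.mp hmul with h | h
      · exact absurd h hIpos.ne'
      · exact h
    have hHt := hH t₀ htI
    rw [hlI0] at hHt
    have heq1 : β * S t₀ * I t₀ * lS t₀ = 1 := by nlinarith [hHt]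
    have hd := hψder t₀ htI
    rw [heq1] at hd
    exact hd
  have hcont : ContinuousOn ψ (Icc 0 T) :=
    fun t ht => (hψder t ht).continuousAt.continuousWithinAt
  have hsign : ∀ t₀ ∈ Ioo 0 T, ψ t₀ = 0 →
      (∀ t ∈ Ioo 0 t₀, 0 < ψ t) ∧ (∀ t ∈ Ioo t₀ T, ψ t < 0) := by
    intro t₀ ht₀ h0
    constructor
    · intro t ht
      by_contra hle
      push_neg at hle
      rcases lt_or_eq_of_le hle with hlt | heq
      · exact no_neg_before' ht.2 (hcont.mono (Icc_subset_Icc ht.1.le ht₀.2.le)) hlt h0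
          (fun c hc hcz => hkey c ⟨lt_trans ht.1 hc.1, lt_of_le_of_lt hc.2 ht₀.2⟩ hcz)
      · obtain ⟨s, hs, hfs⟩ := after_zero' ht.2 heq
          (hkey t ⟨ht.1, ht.2.trans ht₀.2⟩ heq)
        exact no_neg_before' hs.2
          (hcont.mono (Icc_subset_Icc (ht.1.trans hs.1).le ht₀.2.le)) hfs h0
          (fun c hc hcz =>
            hkey c ⟨(ht.1.trans hs.1).trans hc.1, lt_of_le_of_lt hc.2 ht₀.2⟩ hcz)
    · intro t ht
      by_contra hge
      push_neg at hge
      rcases lt_or_eq_of_le hge with hlt | heq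
      · exact no_pos_after' ht.1 (hcont.mono (Icc_subset_Icc ht₀.1.le ht.2.le)) h0 hlt
          (fun c hc hcz => hkey c ⟨lt_of_lt_of_le ht₀.1 hc.1, hc.2.trans ht.2⟩ hcz)
      · obtain ⟨s, hs, hfs⟩ := before_zero' ht.1 heq.symm
          (hkey t ⟨ht₀.1.trans ht.1, ht.2⟩ heq.symm)
        exact no_pos_after' hs.1
          (hcont.mono (Icc_subset_Icc ht₀.1.le ((hs.2.trans ht.2).le))) h0 hfs
          (fun c hc hcz =>
            hkey c ⟨lt_of_lt_of_le ht₀.1 hc.1, (hc.2.trans hs.2).trans ht.2⟩ hcz)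
  refine ⟨?_, ?_, ?_⟩
  · intro t₀ ht₀ h0
    exact (hkey t₀ ht₀ h0).deriv
  · intro t₀ ht₀ t₁ ht₁ h0 h1
    rcases lt_trichotomy t₀ t₁ with h | h | h
    · exact absurd h1 (ne_of_lt ((hsign t₀ ht₀ h0).2 t₁ ⟨h, ht₁.2⟩))
    · exact h
    · exact absurd h0 (ne_of_lt ((hsign t₁ ht₁ h1).2 t₀ ⟨h, ht₀.2⟩))
  · intro t₀ ht₀ h0
    exact hsign t₀ ht₀ h0
end

section
/- Let (S, I) be a trajectory of the controlled SIR system with reduction-of-transmission control on [0, T] with S, I > 0 throughout, let (λ_S, λ_I) solve the adjoint system along this trajectory, and assume the Hamiltonian H(t) is identically zero on [0, T]. Then at every time t₀ where the switching function ψ vanishes, one has λ_S(t₀) = λ_I(t₀) = 1/(μ I(t₀)) and ψ'(t₀) = −βS(t₀) < 0. Consequently ψ has at most one zero in (0, T), and at such a zero ψ changes sign from positive to negative. -/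
open Set

/-- PMP for the reduction-of-transmission SIR system: if the Hamiltonian vanishes
identically on `[0, T]`, then at every zero `t₀` of the switching function
`ψ(t) = (λS(t) - λI(t))βS(t)I(t)` one has `λS(t₀) = λI(t₀) = 1/(μ I(t₀))` and
`ψ'(t₀) = -βS(t₀) < 0`; consequently `ψ` has at most one zero in `(0, T)`, and at such
a zero `ψ` changes sign from positive to negative. -/
theorem reduction_switching_function_unique_zero
    (β μ umax T : ℝ)
    (hβ : 0 < β) (hμ : 0 < μ) (humax : 0 < umax) (humax1 : umax ≤ 1) (hT : 0 < T)
    (u S I lS lI : ℝ → ℝ)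
    (hu_range : ∀ t, u t ∈ Set.Icc 0 umax)
    (hpos : ∀ t ∈ Set.Icc 0 T, 0 < S t ∧ 0 < I t)
    (hS : ∀ t ∈ Set.Icc 0 T,
      HasDerivAt S (-(β * (1 - u t) * S t * I t)) t)
    (hI : ∀ t ∈ Set.Icc 0 T,
      HasDerivAt I (β * (1 - u t) * S t * I t - μ * I t) t)
    (hlS : ∀ t ∈ Set.Icc 0 T,
      HasDerivAt lS ((lS t - lI t) * β * (1 - u t) * I t) t)
    (hlI : ∀ t ∈ Set.Icc 0 T,
      HasDerivAt lI ((lS t - lI t) * β * (1 - u t) * S t + μ * lI t) t)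
    (hH : ∀ t ∈ Set.Icc 0 T,
      1 + (lI t - lS t) * β * (1 - u t) * S t * I t - μ * I t * lI t = 0) :
    (∀ t₀ ∈ Set.Icc 0 T, (lS t₀ - lI t₀) * β * S t₀ * I t₀ = 0 →
      lS t₀ = 1 / (μ * I t₀) ∧ lI t₀ = 1 / (μ * I t₀) ∧
      deriv (fun t => (lS t - lI t) * β * S t * I t) t₀ = -(β * S t₀) ∧
      deriv (fun t => (lS t - lI t) * β * S t * I t) t₀ < 0) ∧
    (∀ t₀ ∈ Set.Ioo 0 T, ∀ t₁ ∈ Set.Ioo 0 T,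
      (lS t₀ - lI t₀) * β * S t₀ * I t₀ = 0 → (lS t₁ - lI t₁) * β * S t₁ * I t₁ = 0 →
      t₀ = t₁) ∧
    (∀ t₀ ∈ Set.Ioo 0 T, (lS t₀ - lI t₀) * β * S t₀ * I t₀ = 0 →
      (∀ t ∈ Set.Ioo 0 t₀, 0 < (lS t - lI t) * β * S t * I t) ∧
      (∀ t ∈ Set.Ioo t₀ T, (lS t - lI t) * β * S t * I t < 0)) := by
  -- `g t = (lS t - lI t) * S t`; using H ≡ 0 one gets g' = -S/I < 0.
  set g : ℝ → ℝ := fun t => (lS t - lI t) * S t with hg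
  have hgderiv : ∀ t ∈ Set.Icc 0 T, HasDerivAt g (-(S t / I t)) t := by
    intro t ht
    obtain ⟨hSpos, hIpos⟩ := hpos t ht
    have hI0 : I t ≠ 0 := ne_of_gt hIpos
    have h1 : HasDerivAt (fun s => lS s - lI s)
        ((lS t - lI t) * β * (1 - u t) * I t -
          ((lS t - lI t) * β * (1 - u t) * S t + μ * lI t)) t :=
      (hlS t ht).sub (hlI t ht)
    have h2 := h1.mul (hS t ht)
    refine h2.congr_deriv ?_
    symm
    have hHt := hH t ht
    field_simp
    linear_combination (-1 : ℝ) * hHt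
  have hGcont : ContinuousOn g (Set.Icc 0 T) := fun t ht =>
    (hgderiv t ht).continuousAt.continuousWithinAt
  have hGanti : StrictAntiOn g (Set.Icc 0 T) := by
    apply strictAntiOn_of_deriv_neg (convex_Icc 0 T) hGcont
    intro t ht
    rw [interior_Icc] at ht
    have ht' : t ∈ Set.Icc 0 T := Set.mem_Icc_of_Ioo ht
    rw [(hgderiv t ht').deriv]
    obtain ⟨hSpos, hIpos⟩ := hpos t ht'
    exact neg_lt_zero.mpr (div_pos hSpos hIpos)
  -- a zero of ψ is a zero of lS - lI, hence of g
  have hzero : ∀ t ∈ Set.Icc 0 T, (lS t - lI t) * β * S t * I t = 0 → lS t = lI t := by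
    intro t ht hz
    obtain ⟨hSpos, hIpos⟩ := hpos t ht
    have : lS t - lI t = 0 := by
      by_contra h
      exact h (by
        have := mul_ne_zero (mul_ne_zero (mul_ne_zero h (ne_of_gt hβ))
          (ne_of_gt hSpos)) (ne_of_gt hIpos)
        exact absurd hz this)
    linarith
  refine ⟨?_, ?_, ?_⟩
  · -- part 1
    intro t₀ ht₀ hz
    obtain ⟨hSpos, hIpos⟩ := hpos t₀ ht₀
    have heq : lS t₀ = lI t₀ := hzero t₀ ht₀ hz
    have hHt := hH t₀ ht₀
    have hlIval : lI t₀ = 1 / (μ * I t₀) := by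
      have h0 : (lI t₀ - lS t₀) = 0 := by linarith
      have h1 : 1 - μ * I t₀ * lI t₀ = 0 := by
        rw [h0] at hHt; linarith [hHt]
      field_simp
      linarith
    have hlSval : lS t₀ = 1 / (μ * I t₀) := heq.trans hlIval
    -- derivative of ψ at t₀
    have hd1 : HasDerivAt (fun s => lS s - lI s)
        ((lS t₀ - lI t₀) * β * (1 - u t₀) * I t₀ -
          ((lS t₀ - lI t₀) * β * (1 - u t₀) * S t₀ + μ * lI t₀)) t₀ :=
      (hlS t₀ ht₀).sub (hlI t₀ ht₀)
    have hd2 := ((hd1.mul_const β).mul (hS t₀ ht₀)).mul (hI t₀ ht₀)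
    have hderiv := hd2.deriv
    have hψ : deriv (fun t => (lS t - lI t) * β * S t * I t) t₀ = -(β * S t₀) := by
      rw [show (fun t => (lS t - lI t) * β * S t * I t) = (fun y => (lS y - lI y) * β) * S * I from rfl, hderiv]
      simp only [Pi.mul_apply]
      have hφ : lS t₀ - lI t₀ = 0 := by linarith
      have hlIv : μ * lI t₀ = 1 / I t₀ := by
        rw [hlIval]; field_simp
      rw [hφ]
      have hI0 : I t₀ ≠ 0 := ne_of_gt hIpos
      field_simp [hI0] at hlIv ⊢
      linear_combination (-1 : ℝ) * hlIv
    refine ⟨hlSval, hlIval, hψ, ?_⟩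
    rw [hψ]
    exact neg_lt_zero.mpr (mul_pos hβ hSpos)
  · -- part 2: uniqueness
    intro t₀ ht₀ t₁ ht₁ hz₀ hz₁
    have ht₀' : t₀ ∈ Set.Icc 0 T := Set.mem_Icc_of_Ioo ht₀
    have ht₁' : t₁ ∈ Set.Icc 0 T := Set.mem_Icc_of_Ioo ht₁
    have hg₀ : g t₀ = 0 := by simp [hg, sub_eq_zero.mpr (hzero t₀ ht₀' hz₀)]
    have hg₁ : g t₁ = 0 := by simp [hg, sub_eq_zero.mpr (hzero t₁ ht₁' hz₁)]
    rcases lt_trichotomy t₀ t₁ with h | h | h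
    · exact absurd (hGanti ht₀' ht₁' h) (by rw [hg₀, hg₁]; exact lt_irrefl 0)
    · exact h
    · exact absurd (hGanti ht₁' ht₀' h) (by rw [hg₀, hg₁]; exact lt_irrefl 0)
  · -- part 3: sign change
    intro t₀ ht₀ hz
    have ht₀' : t₀ ∈ Set.Icc 0 T := Set.mem_Icc_of_Ioo ht₀
    have hg₀ : g t₀ = 0 := by simp [hg, sub_eq_zero.mpr (hzero t₀ ht₀' hz)]
    constructor
    · intro t ht
      have ht' : t ∈ Set.Icc 0 T := ⟨le_of_lt ht.1, le_of_lt (lt_of_lt_of_le ht.2 ht₀'.2)⟩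
      obtain ⟨hSpos, hIpos⟩ := hpos t ht'
      have : 0 < g t := by
        have := hGanti ht' ht₀' ht.2
        rw [hg₀] at this; exact this
      have hφ : 0 < lS t - lI t := by
        by_contra h
        push_neg at h
        have : g t ≤ 0 := mul_nonpos_of_nonpos_of_nonneg h (le_of_lt hSpos)
        linarith
      positivity
    · intro t ht
      have ht' : t ∈ Set.Icc 0 T := ⟨le_of_lt (lt_trans ht₀.1 ht.1), le_of_lt ht.2⟩
      obtain ⟨hSpos, hIpos⟩ := hpos t ht'
      have : g t < 0 := by
        have := hGanti ht₀' ht' ht.1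
        rw [hg₀] at this; exact this
      have hφ : lS t - lI t < 0 := by
        by_contra h
        push_neg at h
        have : 0 ≤ g t := mul_nonneg h (le_of_lt hSpos)
        linarith
      have : (lS t - lI t) * β * S t * I t < 0 := by
        have h1 : 0 < β * S t * I t := by positivity
        calc (lS t - lI t) * β * S t * I t = (lS t - lI t) * (β * S t * I t) := by ring
        _ < 0 := mul_neg_of_neg_of_pos hφ h1
      exact this
end

section
/- Vaccination case ((α₁, α₂) = (1, 0)): let (S, I) be a trajectory of the vaccination-controlled SIR system on [0, T] with S, I > 0 throughout and control u = u(·;τ_s) for some 0 < τ_s < T, and let (λ_S, λ_I) solve the adjoint system on [τ_s, T] with the Hamiltonian identically zero, λ_S(T) = 0, ψ(τ_s) = 0, and ψ < 0 on (τ_s, T), where ψ(t) = −S(t)λ_S(t). Then: (i) ψ has exactly one critical point m_ψ in (τ_s, T), which is a minimum, and there λ_I(m_ψ) = 0 < λ_S(m_ψ); (ii) λ_S is positive on (τ_s, T), vanishes at τ_s and T, and has a unique maximum point M in (τ_s, T), at which λ_I(M) = 1/(μ I(M)) and λ_S(M) = βI(M)λ_I(M)/(βI(M) + u_max) < λ_I(M);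 (iii) m_ψ < M. -/
open Set Filter Topology

lemma ev_pos_right {f : ℝ → ℝ} {c d : ℝ} (hf : HasDerivAt f d c) (hd : 0 < d)
    (hc : f c = 0) : ∀ᶠ t in 𝓝[>] c, 0 < f t := by
  have h1 : Tendsto (slope f c) (𝓝[≠] c) (𝓝 d) := hasDerivAt_iff_tendsto_slope.mp hf
  have h2 : ∀ᶠ t in 𝓝[≠] c, 0 < slope f c t := h1.eventually (eventually_gt_nhds hd)
  have h3 : 𝓝[>] c ≤ 𝓝[≠] c := nhdsWithin_mono c fun x hx => ne_of_gt hx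
  filter_upwards [h2.filter_mono h3, self_mem_nhdsWithin] with t hts htc
  have h4 : slope f c t = f t / (t - c) := by rw [slope_def_field, hc, sub_zero]
  rw [h4] at hts
  have h5 : 0 < t - c := sub_pos.mpr htc
  rcases div_pos_iff.mp hts with ⟨h, _⟩ | ⟨_, h⟩
  · exact h
  · linarith

lemma ev_neg_left {f : ℝ → ℝ} {c d : ℝ} (hf : HasDerivAt f d c) (hd : 0 < d)
    (hc : f c = 0) : ∀ᶠ t in 𝓝[<] c, f t < 0 := by
  have h1 : Tendsto (slope f c) (𝓝[≠] c) (𝓝 d) := hasDerivAt_iff_tendsto_slope.mp hf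
  have h2 : ∀ᶠ t in 𝓝[≠] c, 0 < slope f c t := h1.eventually (eventually_gt_nhds hd)
  have h3 : 𝓝[<] c ≤ 𝓝[≠] c := nhdsWithin_mono c fun x hx => ne_of_lt hx
  filter_upwards [h2.filter_mono h3, self_mem_nhdsWithin] with t hts htc
  have h4 : slope f c t = f t / (t - c) := by rw [slope_def_field, hc, sub_zero]
  rw [h4] at hts
  have h5 : t - c < 0 := sub_neg.mpr htc
  rcases div_pos_iff.mp hts with ⟨_, h⟩ | ⟨h, _⟩
  · linarith
  · exact h



lemma no_two_zeros {f : ℝ → ℝ} {a b : ℝ} (hab : a < b)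
    (hcont : ContinuousOn f (Icc a b))
    (hderiv : ∀ t ∈ Icc a b, f t = 0 → ∃ d, 0 < d ∧ HasDerivAt f d t)
    (ha : f a = 0) (hb : f b = 0) : False := by
  obtain ⟨da, hda, hfa⟩ := hderiv a ⟨le_rfl, hab.le⟩ ha
  obtain ⟨db, hdb, hfb⟩ := hderiv b ⟨hab.le, le_rfl⟩ hb
  have hA := ev_pos_right hfa hda ha
  have hB := ev_neg_left hfb hdb hb
  have hI1 : Ioo a b ∈ 𝓝[>] a := Ioo_mem_nhdsGT_of_mem ⟨le_rfl, hab⟩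
  obtain ⟨a', ha'pos, ha'mem⟩ := (hA.and hI1).exists
  have hI2 : Ioo a' b ∈ 𝓝[<] b := Ioo_mem_nhdsLT_of_mem ⟨ha'mem.2, le_rfl⟩
  obtain ⟨b', hb'neg, hb'mem⟩ := (hB.and hI2).exists
  have hadj : Icc a' b' ⊆ Icc a b := Icc_subset_Icc ha'mem.1.le hb'mem.2.le
  have hcont' : ContinuousOn f (Icc a' b') := hcont.mono hadj
  set Z := Icc a' b' ∩ f ⁻¹' {0} with hZ
  have hZclosed : IsClosed Z :=
    ContinuousOn.preimage_isClosed_of_isClosed hcont' isClosed_Icc isClosed_singleton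
  have hZcomp : IsCompact Z := isCompact_Icc.of_isClosed_subset hZclosed inter_subset_left
  have hZne : Z.Nonempty := by
    obtain ⟨c0, hc0mem, hc00⟩ := intermediate_value_Icc' hb'mem.1.le hcont'
      ⟨hb'neg.le, ha'pos.le⟩
    exact ⟨c0, hc0mem, by simpa using hc00⟩
  set c := sSup Z with hc
  have hcZ : c ∈ Z := hZcomp.sSup_mem hZne
  have hfc : f c = 0 := by simpa using hcZ.2
  have hcb' : c < b' := lt_of_le_of_ne hcZ.1.2 (fun h => by rw [h] at hfc; linarith)
  obtain ⟨dc, hdc, hfc'⟩ := hderiv c (hadj hcZ.1) hfc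
  have hC := ev_pos_right hfc' hdc hfc
  have hI3 : Ioo c b' ∈ 𝓝[>] c := Ioo_mem_nhdsGT_of_mem ⟨le_rfl, hcb'⟩
  obtain ⟨t0, ht0pos, ht0mem⟩ := (hC.and hI3).exists
  have hsub2 : Icc t0 b' ⊆ Icc a' b' := Icc_subset_Icc (hcZ.1.1.trans ht0mem.1.le) le_rfl
  obtain ⟨c', hc'mem, hc'0⟩ := intermediate_value_Icc' ht0mem.2.le (hcont'.mono hsub2)
    ⟨hb'neg.le, ht0pos.le⟩
  have hle : c' ≤ c := le_csSup hZcomp.bddAbove ⟨hsub2 hc'mem, by simpa using hc'0⟩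
  have : t0 ≤ c' := hc'mem.1
  linarith [ht0mem.1]



/-- second-derivative strict local max -/
lemma slm {f g : ℝ → ℝ} {A B c d : ℝ} (hc : c ∈ Ioo A B)
    (hf : ∀ t ∈ Ioo A B, HasDerivAt f (g t) t)
    (hgc : g c = 0) (hg : HasDerivAt g d c) (hd : d < 0) :
    (∀ᶠ t in 𝓝[>] c, f t < f c) ∧ (∀ᶠ t in 𝓝[<] c, f t < f c) := by
  have hnegg : ∀ᶠ t in 𝓝[>] c, g t < 0 := by
    have := ev_pos_right (f := fun t => -g t) hg.neg (by linarith) (by simp [hgc])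
    filter_upwards [this] with t ht; linarith
  have hposg : ∀ᶠ t in 𝓝[<] c, 0 < g t := by
    have := ev_neg_left (f := fun t => -g t) hg.neg (by linarith) (by simp [hgc])
    filter_upwards [this] with t ht; linarith
  constructor
  · obtain ⟨u, hu, huIoo⟩ := mem_nhdsGT_iff_exists_Ioo_subset.mp hnegg
    have hcu' : c < min u B := lt_min hu.out hc.2
    have hIoo : Ioo c (min u B) ∈ 𝓝[>] c := Ioo_mem_nhdsGT_of_mem ⟨le_rfl, hcu'⟩
    filter_upwards [hIoo] with t ht
    have hsub : Icc c t ⊆ Ioo A B := fun x hx =>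
      ⟨lt_of_lt_of_le hc.1 hx.1, lt_of_le_of_lt hx.2 (lt_of_lt_of_le ht.2 (min_le_right _ _))⟩
    have hanti : StrictAntiOn f (Icc c t) := by
      apply strictAntiOn_of_deriv_neg (convex_Icc c t)
      · exact fun x hx => ((hf x (hsub hx)).continuousAt).continuousWithinAt
      · intro x hx
        rw [interior_Icc] at hx
        rw [(hf x (hsub ⟨hx.1.le, hx.2.le⟩)).deriv]
        exact huIoo ⟨hx.1, lt_of_lt_of_le hx.2 (le_trans ht.2.le (min_le_left _ _))⟩
    exact hanti ⟨le_rfl, ht.1.le⟩ ⟨ht.1.le, le_rfl⟩ ht.1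
  · obtain ⟨l, hl, hlIoo⟩ := mem_nhdsLT_iff_exists_Ioo_subset.mp hposg
    have hl'c : max l A < c := max_lt hl.out hc.1
    have hIoo : Ioo (max l A) c ∈ 𝓝[<] c := Ioo_mem_nhdsLT_of_mem ⟨hl'c, le_rfl⟩
    filter_upwards [hIoo] with t ht
    have hsub : Icc t c ⊆ Ioo A B := fun x hx =>
      ⟨lt_of_le_of_lt (le_max_right l A) (lt_of_lt_of_le ht.1 hx.1), lt_of_le_of_lt hx.2 hc.2⟩
    have hmono : StrictMonoOn f (Icc t c) := by
      apply strictMonoOn_of_deriv_pos (convex_Icc t c)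
      · exact fun x hx => ((hf x (hsub hx)).continuousAt).continuousWithinAt
      · intro x hx
        rw [interior_Icc] at hx
        rw [(hf x (hsub ⟨hx.1.le, hx.2.le⟩)).deriv]
        exact hlIoo ⟨lt_of_le_of_lt (le_max_left l A) (lt_of_lt_of_le ht.1 hx.1.le), hx.2⟩
    exact hmono ⟨le_rfl, ht.2.le⟩ ⟨ht.2.le, le_rfl⟩ ht.2


lemma crit_unique_aux {f g : ℝ → ℝ} {A B : ℝ}
    (hf : ∀ t ∈ Ioo A B, HasDerivAt f (g t) t)
    (hslm : ∀ c ∈ Ioo A B, g c = 0 →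
      (∀ᶠ t in 𝓝[>] c, f t < f c) ∧ (∀ᶠ t in 𝓝[<] c, f t < f c))
    {c1 c2 : ℝ} (h1 : c1 ∈ Ioo A B) (h2 : c2 ∈ Ioo A B)
    (hg1 : g c1 = 0) (hg2 : g c2 = 0) (hlt : c1 < c2) : False := by
  have hsub : Icc c1 c2 ⊆ Ioo A B := fun x hx =>
    ⟨lt_of_lt_of_le h1.1 hx.1, lt_of_le_of_lt hx.2 h2.2⟩
  have hcont : ContinuousOn f (Icc c1 c2) :=
    fun x hx => ((hf x (hsub hx)).continuousAt).continuousWithinAt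
  obtain ⟨c, hcmem, hcmin⟩ := isCompact_Icc.exists_isMinOn (nonempty_Icc.mpr hlt.le) hcont
  rcases eq_or_lt_of_le hcmem.1 with h | hc1c
  · -- c = c1
    obtain ⟨t, htlt, htmem⟩ := ((hslm c1 h1 hg1).1.and
      (Ioo_mem_nhdsGT_of_mem ⟨le_rfl, hlt⟩)).exists
    have := hcmin (Ioo_subset_Icc_self htmem)
    rw [← h] at this
    exact absurd htlt (not_lt.mpr this)
  rcases eq_or_lt_of_le hcmem.2 with h | hcc2
  · -- c = c2
    obtain ⟨t, htlt, htmem⟩ := ((hslm c2 h2 hg2).2.and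
      (Ioo_mem_nhdsLT_of_mem ⟨hlt, le_rfl⟩)).exists
    have := hcmin (Ioo_subset_Icc_self htmem)
    rw [h] at this
    exact absurd htlt (not_lt.mpr this)
  -- interior
  have hcIoo : c ∈ Ioo A B := hsub hcmem
  have hloc : IsLocalMin f c := hcmin.isLocalMin (Icc_mem_nhds hc1c hcc2)
  have hgc : g c = 0 := by
    have := hloc.deriv_eq_zero
    rwa [(hf c hcIoo).deriv] at this
  obtain ⟨t, htlt, htmem⟩ := ((hslm c hcIoo hgc).1.and
    (Ioo_mem_nhdsGT_of_mem ⟨le_rfl, hcc2⟩)).exists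
  have := hcmin (⟨hc1c.le.trans htmem.1.le, htmem.2.le⟩ : t ∈ Icc c1 c2)
  exact absurd htlt (not_lt.mpr this)

lemma crit_unique {f g : ℝ → ℝ} {A B : ℝ}
    (hf : ∀ t ∈ Ioo A B, HasDerivAt f (g t) t)
    (hslm : ∀ c ∈ Ioo A B, g c = 0 →
      (∀ᶠ t in 𝓝[>] c, f t < f c) ∧ (∀ᶠ t in 𝓝[<] c, f t < f c))
    {c1 c2 : ℝ} (h1 : c1 ∈ Ioo A B) (h2 : c2 ∈ Ioo A B)
    (hg1 : g c1 = 0) (hg2 : g c2 = 0) : c1 = c2 := by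
  rcases lt_trichotomy c1 c2 with h | h | h
  · exact absurd (crit_unique_aux hf hslm h1 h2 hg1 hg2 h) not_false
  · exact h
  · exact absurd (crit_unique_aux hf hslm h2 h1 hg2 hg1 h) not_false


/-- PMP structure for a delayed extremal of the vaccination-controlled SIR system
(`(α₁, α₂) = (1, 0)`) with switching time `0 < τs < T`: with `ψ(t) = -S(t)λS(t)`,
(i) `ψ` has exactly one critical point `m` in `(τs, T)`, a minimum, where
`λI(m) = 0 < λS(m)`; (ii) `λS` is positive on `(τs, T)`, vanishes at `τs` and `T`, and has
a unique maximum point `M` in `(τs, T)`, where `λI(M) = 1/(μ I(M))` and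
`λS(M) = βI(M)λI(M)/(βI(M) + u_max) < λI(M)`; (iii) `m < M`. -/
theorem vaccination_delayed_extremal_structure
    (β μ umax τs T : ℝ)
    (hβ : 0 < β) (hμ : 0 < μ) (humax : 0 < umax)
    (hτs : 0 < τs) (hτsT : τs < T)
    (S I lS lI : ℝ → ℝ)
    (hpos : ∀ t ∈ Set.Icc 0 T, 0 < S t ∧ 0 < I t)
    (hS1 : ∀ t ∈ Set.Icc 0 τs,
      HasDerivWithinAt S (-(β * S t * I t)
        - delayedControl umax τs t * S t) (Set.Icc 0 τs) t)
    (hI1 : ∀ t ∈ Set.Icc 0 τs,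
      HasDerivWithinAt I (β * S t * I t - μ * I t) (Set.Icc 0 τs) t)
    (hS2 : ∀ t ∈ Set.Icc τs T,
      HasDerivWithinAt S (-(β * S t * I t) - umax * S t) (Set.Icc τs T) t)
    (hI2 : ∀ t ∈ Set.Icc τs T,
      HasDerivWithinAt I (β * S t * I t - μ * I t) (Set.Icc τs T) t)
    (hlS : ∀ t ∈ Set.Icc τs T,
      HasDerivWithinAt lS ((lS t - lI t) * β * I t + umax * lS t) (Set.Icc τs T) t)
    (hlI : ∀ t ∈ Set.Icc τs T,
      HasDerivWithinAt lI ((lS t - lI t) * β * S t + μ * lI t) (Set.Icc τs T) t)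
    (hH : ∀ t ∈ Set.Icc τs T,
      1 - (β * S t * I t + umax * S t) * lS t + (β * S t * I t - μ * I t) * lI t = 0)
    (htrans : lS T = 0)
    (hψτs : -(S τs * lS τs) = 0)
    (hψneg : ∀ t ∈ Set.Ioo τs T, -(S t * lS t) < 0) :
    ∃ m M : ℝ, m ∈ Set.Ioo τs T ∧ M ∈ Set.Ioo τs T ∧
      -- (i) `m` is the unique critical point of `ψ` in `(τs, T)` and is a minimum point
      IsMinOn (fun t => -(S t * lS t)) (Set.Icc τs T) m ∧
      (∀ t ∈ Set.Ioo τs T, deriv (fun t' => -(S t' * lS t')) t = 0 → t = m) ∧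
      lI m = 0 ∧ 0 < lS m ∧ lI m < lS m ∧
      -- (ii) `λS` is positive on `(τs, T)`, vanishes at the endpoints, and has a unique
      -- maximum point `M` in `(τs, T)`
      (∀ t ∈ Set.Ioo τs T, 0 < lS t) ∧ lS τs = 0 ∧ lS T = 0 ∧
      IsMaxOn lS (Set.Icc τs T) M ∧
      (∀ t ∈ Set.Ioo τs T, IsMaxOn lS (Set.Icc τs T) t → t = M) ∧
      lI M = 1 / (μ * I M) ∧
      lS M = β * I M * lI M / (β * I M + umax) ∧
      lS M < lI M ∧
      -- (iii)
      m < M := by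
  have hsub0 : Icc τs T ⊆ Icc (0:ℝ) T := Icc_subset_Icc hτs.le le_rfl
  have hSpos : ∀ t ∈ Icc τs T, 0 < S t := fun t ht => (hpos t (hsub0 ht)).1
  have hIpos : ∀ t ∈ Icc τs T, 0 < I t := fun t ht => (hpos t (hsub0 ht)).2
  have hmemN : ∀ t ∈ Ioo τs T, Icc τs T ∈ 𝓝 t := fun t ht => Icc_mem_nhds ht.1 ht.2
  have hS' : ∀ t ∈ Ioo τs T, HasDerivAt S (-(β * S t * I t) - umax * S t) t :=
    fun t ht => (hS2 t (Ioo_subset_Icc_self ht)).hasDerivAt (hmemN t ht)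
  have hI' : ∀ t ∈ Ioo τs T, HasDerivAt I (β * S t * I t - μ * I t) t :=
    fun t ht => (hI2 t (Ioo_subset_Icc_self ht)).hasDerivAt (hmemN t ht)
  have hlS' : ∀ t ∈ Ioo τs T,
      HasDerivAt lS ((lS t - lI t) * β * I t + umax * lS t) t :=
    fun t ht => (hlS t (Ioo_subset_Icc_self ht)).hasDerivAt (hmemN t ht)
  have hlI' : ∀ t ∈ Ioo τs T,
      HasDerivAt lI ((lS t - lI t) * β * S t + μ * lI t) t :=
    fun t ht => (hlI t (Ioo_subset_Icc_self ht)).hasDerivAt (hmemN t ht)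
  have hψ' : ∀ t ∈ Ioo τs T,
      HasDerivAt (fun t' => -(S t' * lS t')) (β * S t * I t * lI t) t := by
    intro t ht
    have h := ((hS' t ht).mul (hlS' t ht)).neg
    exact h.congr_deriv (by ring)
  have hScont : ContinuousOn S (Icc τs T) := fun t ht => (hS2 t ht).continuousWithinAt
  have hlScont : ContinuousOn lS (Icc τs T) := fun t ht => (hlS t ht).continuousWithinAt
  have hlIcont : ContinuousOn lI (Icc τs T) := fun t ht => (hlI t ht).continuousWithinAt
  have hψcont : ContinuousOn (fun t => -(S t * lS t)) (Icc τs T) :=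
    (hScont.mul hlScont).neg
  have hlSτs : lS τs = 0 := by
    have h0 : S τs * lS τs = 0 := by linarith [hψτs]
    have h1 := hSpos τs ⟨le_rfl, hτsT.le⟩
    rcases mul_eq_zero.mp h0 with h | h
    · linarith
    · exact h
  have hlSpos : ∀ t ∈ Ioo τs T, 0 < lS t := by
    intro t ht
    have h1 := hψneg t ht
    have h2 := hSpos t (Ioo_subset_Icc_self ht)
    nlinarith
  -- minimum of ψ
  obtain ⟨m, hmmem, hmmin⟩ :=
    isCompact_Icc.exists_isMinOn (nonempty_Icc.mpr hτsT.le) hψcont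
  have hmid : (τs + T)/2 ∈ Ioo τs T := ⟨by linarith, by linarith⟩
  have hψmneg : -(S m * lS m) < 0 :=
    lt_of_le_of_lt (hmmin (Ioo_subset_Icc_self hmid)) (hψneg _ hmid)
  have hm : m ∈ Ioo τs T := by
    rcases eq_or_lt_of_le hmmem.1 with h | h1
    · exfalso; rw [← h] at hψmneg; linarith [hψτs]
    rcases eq_or_lt_of_le hmmem.2 with h | h2
    · exfalso; rw [h, htrans] at hψmneg; simp at hψmneg
    exact ⟨h1, h2⟩
  have hlIm : lI m = 0 := by
    have hloc : IsLocalMin (fun t => -(S t * lS t)) m := hmmin.isLocalMin (hmemN m hm)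
    have hd := hloc.deriv_eq_zero
    rw [(hψ' m hm).deriv] at hd
    have h2 := hSpos m (Ioo_subset_Icc_self hm)
    have h3 := hIpos m (Ioo_subset_Icc_self hm)
    have hne : β * S m * I m ≠ 0 := by positivity
    rcases mul_eq_zero.mp hd with h | h
    · exact absurd h hne
    · exact h
  -- uniqueness of zeros of lI in (τs, T)
  have hzero_uniq : ∀ t ∈ Ioo τs T, lI t = 0 → t = m := by
    have key : ∀ a b : ℝ, a ∈ Ioo τs T → b ∈ Ioo τs T → a < b →
        lI a = 0 → lI b = 0 → False := by
      intro a b ha hb hab ha0 hb0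
      apply no_two_zeros hab (hlIcont.mono (Icc_subset_Icc ha.1.le hb.2.le)) ?_ ha0 hb0
      intro x hx hx0
      have hxI : x ∈ Ioo τs T := ⟨lt_of_lt_of_le ha.1 hx.1, lt_of_le_of_lt hx.2 hb.2⟩
      refine ⟨(lS x - lI x) * β * S x + μ * lI x, ?_, hlI' x hxI⟩
      have h1 := hlSpos x hxI
      have h2 := hSpos x (Ioo_subset_Icc_self hxI)
      rw [hx0]
      have hp : 0 < lS x * β * S x := by positivity
      nlinarith
    intro t ht ht0
    by_contra hne
    rcases lt_or_gt_of_ne hne with h | h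
    · exact key t m ht hm h ht0 hlIm
    · exact key m t hm ht h hlIm ht0
  have huniqcrit : ∀ t ∈ Ioo τs T, deriv (fun t' => -(S t' * lS t')) t = 0 → t = m := by
    intro t ht hd
    rw [(hψ' t ht).deriv] at hd
    have h2 := hSpos t (Ioo_subset_Icc_self ht)
    have h3 := hIpos t (Ioo_subset_Icc_self ht)
    have hne : β * S t * I t ≠ 0 := by positivity
    rcases mul_eq_zero.mp hd with h | h
    · exact absurd h hne
    · exact hzero_uniq t ht h
  have hlSm : 0 < lS m := hlSpos m hm
  -- maximum of lS
  obtain ⟨M, hMmem, hMmax⟩ :=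
    isCompact_Icc.exists_isMaxOn (nonempty_Icc.mpr hτsT.le) hlScont
  have hlSMpos : 0 < lS M :=
    lt_of_lt_of_le (hlSpos _ hmid) (hMmax (Ioo_subset_Icc_self hmid))
  have hM : M ∈ Ioo τs T := by
    rcases eq_or_lt_of_le hMmem.1 with h | h1
    · exfalso; rw [← h, hlSτs] at hlSMpos; exact lt_irrefl 0 hlSMpos
    rcases eq_or_lt_of_le hMmem.2 with h | h2
    · exfalso; rw [h, htrans] at hlSMpos; exact lt_irrefl 0 hlSMpos
    exact ⟨h1, h2⟩
  have hgM : (lS M - lI M) * β * I M + umax * lS M = 0 := by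
    have hloc : IsLocalMax lS M := hMmax.isLocalMax (hmemN M hM)
    have hd := hloc.deriv_eq_zero
    rwa [(hlS' M hM).deriv] at hd
  -- strict local max at every critical point of lS
  have hslm : ∀ c ∈ Ioo τs T,
      (fun t => (lS t - lI t) * β * I t + umax * lS t) c = 0 →
      (∀ᶠ t in 𝓝[>] c, lS t < lS c) ∧ (∀ᶠ t in 𝓝[<] c, lS t < lS c) := by
    intro c hc hgc
    simp only at hgc
    have hg2 : HasDerivAt (fun t => (lS t - lI t) * β * I t + umax * lS t)
        (-(β * μ * I c * lS c)) c := by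
      have h := ((((hlS' c hc).sub (hlI' c hc)).mul_const β).mul (hI' c hc)).add
        ((hlS' c hc).const_mul umax)
      exact h.congr_deriv (by simp only [Pi.sub_apply]; linear_combination (β * I c + umax) * hgc)
    have hlSc := hlSpos c hc
    have hIc := hIpos c (Ioo_subset_Icc_self hc)
    have hp : 0 < β * μ * I c * lS c := by positivity
    exact slm hc hlS' hgc hg2 (by linarith)
  have hMuniq : ∀ t ∈ Ioo τs T, IsMaxOn lS (Icc τs T) t → t = M := by
    intro t ht hmax
    have hgt : (lS t - lI t) * β * I t + umax * lS t = 0 := by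
      have hloc : IsLocalMax lS t := hmax.isLocalMax (hmemN t ht)
      have hd := hloc.deriv_eq_zero
      rwa [(hlS' t ht).deriv] at hd
    exact crit_unique hlS' hslm ht hM hgt hgM
  -- values at M
  have hIM := hIpos M (Ioo_subset_Icc_self hM)
  have hSM := hSpos M (Ioo_subset_Icc_self hM)
  have hHM := hH M (Ioo_subset_Icc_self hM)
  have hμI : μ * I M * lI M = 1 := by
    linear_combination (-1 : ℝ) * hHM - S M * hgM
  have hlIM : lI M = 1 / (μ * I M) := by
    have hne : μ * I M ≠ 0 := by positivity
    field_simp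
    linear_combination hμI
  have hlIMpos : 0 < lI M := by
    rw [hlIM]; positivity
  have hlSM_eq : lS M = β * I M * lI M / (β * I M + umax) := by
    have hne : β * I M + umax ≠ 0 := by positivity
    field_simp
    linear_combination hgM
  have hlSMlt : lS M < lI M := by
    nlinarith [mul_pos humax hlIMpos, mul_pos hβ hIM]
  -- (iii)
  have hmM : m < M := by
    rcases lt_trichotomy m M with h | h | h
    · exact h
    · exfalso; rw [← h] at hlIMpos; rw [hlIm] at hlIMpos; exact lt_irrefl 0 hlIMpos
    · exfalso
      have hd := hlI' m hm
      have hdm_pos : 0 < (lS m - lI m) * β * S m + μ * lI m := by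
        have h1 := hSpos m (Ioo_subset_Icc_self hm)
        rw [hlIm]
        nlinarith
      have hevl := ev_neg_left hd hdm_pos hlIm
      have hIooMm : Ioo M m ∈ 𝓝[<] m := Ioo_mem_nhdsLT_of_mem ⟨h, le_rfl⟩
      obtain ⟨b', hb'neg, hb'mem⟩ := (hevl.and hIooMm).exists
      have hsubMb : Icc M b' ⊆ Icc τs T :=
        Icc_subset_Icc hM.1.le (hb'mem.2.le.trans hm.2.le)
      obtain ⟨c, hcmem, hc0⟩ := intermediate_value_Icc' hb'mem.1.le
        (hlIcont.mono hsubMb) ⟨hb'neg.le, hlIMpos.le⟩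
      have hcIoo : c ∈ Ioo τs T :=
        ⟨lt_of_lt_of_le hM.1 hcmem.1, lt_of_le_of_lt hcmem.2 (hb'mem.2.trans hm.2)⟩
      have hcm := hzero_uniq c hcIoo hc0
      rw [hcm] at hcmem
      linarith [hb'mem.2, hcmem.2]
  refine ⟨m, M, hm, hM, hmmin, huniqcrit, hlIm, hlSm, by rw [hlIm]; exact hlSm,
    hlSpos, hlSτs, htrans, hMmax, hMuniq, hlIM, hlSM_eq, hlSMlt, hmM⟩
end

section
/- Vaccination case ((α₁, α₂) = (1, 0)): let (S, I) be a trajectory of the vaccination-controlled SIR system on [0, T] with S, I > 0 throughout, with βS(0)/μ > 1 and control u = u(·;τ_s) for some 0 < τ_s < T, and suppose (λ_S, λ_I) solves the adjoint system on [τ_s, T] with the Hamiltonian identically zero, λ_S(T) = 0, ψ(τ_s) = 0, and ψ < 0 on (τ_s, T), where ψ(t) = −S(t)λ_S(t). Then necessarily μ > u_max. Equivalently, if u_max ≥ μ no such delayed extremal exists, so the time-optimal vaccination control is the constant control u ≡ u_max. -/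
open Set

/-- If `f` has (one-sided) derivative `d` at the left endpoint `a` of `[a,b]`,
`f a = 0` and `f ≥ 0` on `(a,b]`, then `d ≥ 0`. -/
lemma deriv_nonneg_left_endpoint {f : ℝ → ℝ} {a b d : ℝ} (hab : a < b)
    (hf : HasDerivWithinAt f d (Set.Icc a b) a) (ha : f a = 0)
    (hnn : ∀ t ∈ Set.Ioc a b, 0 ≤ f t) : 0 ≤ d := by
  rw [hasDerivWithinAt_iff_tendsto_slope, Set.Icc_diff_left] at hf
  have hne : (nhdsWithin a (Set.Ioc a b)).NeBot := by
    refine mem_closure_iff_nhdsWithin_neBot.mp ?_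
    rw [closure_Ioc hab.ne]
    exact ⟨le_refl a, hab.le⟩
  refine ge_of_tendsto hf ?_
  filter_upwards [self_mem_nhdsWithin] with t ht
  have h1 : 0 ≤ f t := hnn t ht
  have h2 : 0 < t - a := sub_pos.mpr ht.1
  have : slope f a t = (f t - f a) / (t - a) := by
    simp [slope_def_field, div_eq_inv_mul]
  rw [this, ha, sub_zero]
  positivity

/-- If `f` has (one-sided) derivative `d` at the right endpoint `b` of `[a,b]`,
`f b = 0` and `f ≥ 0` on `[a,b)`, then `d ≤ 0`. -/
lemma deriv_nonpos_right_endpoint {f : ℝ → ℝ} {a b d : ℝ} (hab : a < b)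
    (hf : HasDerivWithinAt f d (Set.Icc a b) b) (hb : f b = 0)
    (hnn : ∀ t ∈ Set.Ico a b, 0 ≤ f t) : d ≤ 0 := by
  rw [hasDerivWithinAt_iff_tendsto_slope, Set.Icc_sdiff_right] at hf
  have hne : (nhdsWithin b (Set.Ico a b)).NeBot := by
    refine mem_closure_iff_nhdsWithin_neBot.mp ?_
    rw [closure_Ico hab.ne]
    exact ⟨hab.le, le_refl b⟩
  refine le_of_tendsto hf ?_
  filter_upwards [self_mem_nhdsWithin] with t ht
  have h1 : 0 ≤ f t := hnn t ht
  have h2 : t - b < 0 := sub_neg.mpr ht.2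
  have : slope f b t = (f t - f b) / (t - b) := by
    simp [slope_def_field, div_eq_inv_mul]
  rw [this, hb, sub_zero]
  exact div_nonpos_of_nonneg_of_nonpos h1 h2.le

/-- PMP for the vaccination-controlled SIR system (`(α₁, α₂) = (1, 0)`): if `βS(0)/μ > 1`
and a delayed extremal with switching time `0 < τs < T` exists (Hamiltonian identically
zero on `[τs, T]`, `λS(T) = 0`, `ψ(τs) = 0` and `ψ < 0` on `(τs, T)` for
`ψ(t) = -S(t)λS(t)`), then necessarily `μ > u_max`; equivalently, if `u_max ≥ μ` no such
delayed extremal exists and the optimal vaccination control is constant `u ≡ u_max`. -/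
theorem vaccination_delayed_extremal_needs_mu_gt_umax
    (β μ umax τs T : ℝ)
    (hβ : 0 < β) (hμ : 0 < μ) (humax : 0 < umax)
    (hτs : 0 < τs) (hτsT : τs < T)
    (S I lS lI : ℝ → ℝ)
    (hR0 : 1 < β * S 0 / μ)
    (hpos : ∀ t ∈ Set.Icc 0 T, 0 < S t ∧ 0 < I t)
    (hS1 : ∀ t ∈ Set.Icc 0 τs,
      HasDerivWithinAt S (-(β * S t * I t)
        - delayedControl umax τs t * S t) (Set.Icc 0 τs) t)
    (hI1 : ∀ t ∈ Set.Icc 0 τs,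
      HasDerivWithinAt I (β * S t * I t - μ * I t) (Set.Icc 0 τs) t)
    (hS2 : ∀ t ∈ Set.Icc τs T,
      HasDerivWithinAt S (-(β * S t * I t) - umax * S t) (Set.Icc τs T) t)
    (hI2 : ∀ t ∈ Set.Icc τs T,
      HasDerivWithinAt I (β * S t * I t - μ * I t) (Set.Icc τs T) t)
    (hlS : ∀ t ∈ Set.Icc τs T,
      HasDerivWithinAt lS ((lS t - lI t) * β * I t + umax * lS t) (Set.Icc τs T) t)
    (hlI : ∀ t ∈ Set.Icc τs T,
      HasDerivWithinAt lI ((lS t - lI t) * β * S t + μ * lI t) (Set.Icc τs T) t)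
    (hH : ∀ t ∈ Set.Icc τs T,
      1 - (β * S t * I t + umax * S t) * lS t + (β * S t * I t - μ * I t) * lI t = 0)
    (htrans : lS T = 0)
    (hψτs : -(S τs * lS τs) = 0)
    (hψneg : ∀ t ∈ Set.Ioo τs T, -(S t * lS t) < 0) :
    umax < μ := by
  by_contra hcon
  push_neg at hcon
  -- `hcon : μ ≤ umax`
  have hsub : Set.Icc τs T ⊆ Set.Icc 0 T := Set.Icc_subset_Icc hτs.le le_rfl
  have hτsmem : τs ∈ Set.Icc τs T := ⟨le_rfl, hτsT.le⟩
  have hTmem : T ∈ Set.Icc τs T := ⟨hτsT.le, le_rfl⟩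
  have hposS : ∀ t ∈ Set.Icc τs T, 0 < S t := fun t ht => (hpos t (hsub ht)).1
  have hposI : ∀ t ∈ Set.Icc τs T, 0 < I t := fun t ht => (hpos t (hsub ht)).2
  -- λS vanishes at τs
  have hlSτs : lS τs = 0 := by
    have h := neg_eq_zero.mp hψτs
    have := (hposS τs hτsmem).ne'
    exact (mul_eq_zero.mp h).resolve_left this
  -- λS positive on the open interval
  have hlSpos : ∀ t ∈ Set.Ioo τs T, 0 < lS t := by
    intro t ht
    have h := hψneg t ht
    have hS := hposS t ⟨ht.1.le, ht.2.le⟩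
    nlinarith
  have hlSnn : ∀ t ∈ Set.Icc τs T, 0 ≤ lS t := by
    intro t ht
    rcases eq_or_lt_of_le ht.1 with h1 | h1
    · rw [← h1, hlSτs]
    rcases eq_or_lt_of_le ht.2 with h2 | h2
    · rw [h2, htrans]
    · exact (hlSpos t ⟨h1, h2⟩).le
  -- the function `f = S * lS` (i.e. `-ψ`), nonnegative on `[τs, T]`
  have hfderiv : ∀ t ∈ Set.Icc τs T,
      HasDerivWithinAt (fun t => S t * lS t)
        (-(β * S t * I t * lI t)) (Set.Icc τs T) t := by
    intro t ht
    have h := (hS2 t ht).mul (hlS t ht)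
    exact h.congr_deriv (by ring)
  have hfnn : ∀ t ∈ Set.Icc τs T, 0 ≤ S t * lS t := by
    intro t ht
    exact mul_nonneg (hposS t ht).le (hlSnn t ht)
  have hfτs : S τs * lS τs = 0 := neg_eq_zero.mp hψτs
  have hfT : S T * lS T = 0 := by rw [htrans, mul_zero]
  -- sign of λI at the endpoints from one-sided derivatives of `-ψ`
  have hlIτs_le : lI τs ≤ 0 := by
    have hd : 0 ≤ -(β * S τs * I τs * lI τs) :=
      deriv_nonneg_left_endpoint hτsT (hfderiv τs hτsmem) hfτs
        (fun t ht => hfnn t ⟨ht.1.le, ht.2⟩)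
    have hS := hposS τs hτsmem
    have hI := hposI τs hτsmem
    nlinarith [mul_pos (mul_pos hβ hS) hI]
  have hlIT_ge : 0 ≤ lI T := by
    have hd : -(β * S T * I T * lI T) ≤ 0 :=
      deriv_nonpos_right_endpoint hτsT (hfderiv T hTmem) hfT
        (fun t ht => hfnn t ⟨ht.1, ht.2.le⟩)
    have hS := hposS T hTmem
    have hI := hposI T hTmem
    nlinarith [mul_pos (mul_pos hβ hS) hI]
  -- strict signs from the Hamiltonian condition at the endpoints
  have hlIτs : lI τs < 0 := by
    have h := hH τs hτsmem
    rw [hlSτs] at h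
    rcases lt_or_eq_of_le hlIτs_le with h' | h'
    · exact h'
    · rw [h'] at h; norm_num at h
  have hlIT : 0 < lI T := by
    have h := hH T hTmem
    rw [htrans] at h
    rcases lt_or_eq_of_le hlIT_ge with h' | h'
    · exact h'
    · rw [← h'] at h; norm_num at h
  -- the auxiliary function g = (λS - λI) · S · I · e^{umax t} is monotone
  set g : ℝ → ℝ := fun t => (lS t - lI t) * (S t * (I t * Real.exp (umax * t))) with hg_def
  have hexp : ∀ t : ℝ, HasDerivAt (fun t => Real.exp (umax * t))
      (Real.exp (umax * t) * umax) t := by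
    intro t
    simpa using ((hasDerivAt_id t).const_mul umax).exp
  have hgderiv : ∀ t ∈ Set.Icc τs T,
      HasDerivWithinAt g
        ((umax - μ) * lS t * (S t * (I t * Real.exp (umax * t)))) (Set.Icc τs T) t := by
    intro t ht
    have h := ((hlS t ht).sub (hlI t ht)).mul
      ((hS2 t ht).mul ((hI2 t ht).mul ((hexp t).hasDerivWithinAt)))
    exact h.congr_deriv (by simp only [Pi.mul_apply, Pi.sub_apply]; ring)
  have hgmono : MonotoneOn g (Set.Icc τs T) := by
    apply monotoneOn_of_hasDerivWithinAt_nonneg (convex_Icc τs T)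
      (f' := fun t => (umax - μ) * lS t * (S t * (I t * Real.exp (umax * t))))
    · intro t ht
      exact (hgderiv t ht).continuousWithinAt
    · intro t ht
      rw [interior_Icc] at ht
      exact ((hgderiv t ⟨ht.1.le, ht.2.le⟩).mono Set.Ioo_subset_Icc_self).mono
        (by rw [interior_Icc])
    · intro t ht
      rw [interior_Icc] at ht
      have h1 : 0 ≤ umax - μ := sub_nonneg.mpr hcon
      have h2 : 0 ≤ lS t := hlSnn t ⟨ht.1.le, ht.2.le⟩
      have h3 : 0 < S t := hposS t ⟨ht.1.le, ht.2.le⟩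
      have h4 : 0 < I t := hposI t ⟨ht.1.le, ht.2.le⟩
      have h5 : 0 < Real.exp (umax * t) := Real.exp_pos _
      positivity
  -- endpoint values of g give a contradiction
  have hgτs : 0 < g τs := by
    have hS := hposS τs hτsmem
    have hI := hposI τs hτsmem
    have he : 0 < Real.exp (umax * τs) := Real.exp_pos _
    have : g τs = (0 - lI τs) * (S τs * (I τs * Real.exp (umax * τs))) := by
      simp only [hg_def, hlSτs]
    rw [this]
    have h1 : 0 < 0 - lI τs := by linarith
    positivity
  have hgT : g T < 0 := by
    have hS := hposS T hTmem
    have hI := hposI T hTmem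
    have he : 0 < Real.exp (umax * T) := Real.exp_pos _
    have : g T = (0 - lI T) * (S T * (I T * Real.exp (umax * T))) := by
      simp only [hg_def, htrans]
    rw [this]
    have h1 : 0 - lI T < 0 := by linarith
    have h2 : 0 < S T * (I T * Real.exp (umax * T)) := by positivity
    nlinarith
  have := hgmono hτsmem hTmem hτsT.le
  linarith
end
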